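/- arXiv:2206.00094 — 11 statements merged into one kernel-verified Lean document; each statement's English description precedes it below -/
import Mathlib

section
/- Let n ≥ 1 and let 𝒫 be a tagged partition of C = {1,…,n}. The polydiagonal subspace Δ_𝒫 is an evenly tagged anti-synchrony subspace if and only if the all-ones vector 𝟙 = (1,…,1) is orthogonal to Δ_𝒫, i.e., ∑_{i=1}^n x_i = 0 for every x ∈ Δ_𝒫. -/
/-- A tagged partition of `{1,…,n}` (modeled as `Fin n`): a partition into nonempty
classes together with a partial involution on the classes having at most one fixed point.
The partial involution is encoded by `star`, with `star P = none` meaning `*` is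
undefined at `P` (in particular `star P = none` for any `P` that is not a class). -/
structure TaggedPartition (n : ℕ) where
  classes : Set (Set (Fin n))
  classes_nonempty : ∀ P ∈ classes, P.Nonempty
  cover : ∀ i : Fin n, ∃ P ∈ classes, i ∈ P
  eq_of_inter : ∀ P ∈ classes, ∀ Q ∈ classes, (P ∩ Q).Nonempty → P = Q
  star : Set (Fin n) → Option (Set (Fin n))
  star_dom : ∀ P, star P ≠ none → P ∈ classes
  star_ran : ∀ P Q, star P = some Q → Q ∈ classes
  star_invol : ∀ P Q, star P = some Q → star Q = some P
  star_fixed : ∀ P Q, star P = some P → star Q = some Q → P = Q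

/-- The polydiagonal subspace `Δ_tp ⊆ ℝⁿ` of a tagged partition:
`x_i = x_j` whenever `[i] = [j]`, and `x_i = -x_j` whenever `[i]* = [j]`. -/
def TaggedPartition.polydiag {n : ℕ} (tp : TaggedPartition n) : Set (Fin n → ℝ) :=
  {x | (∀ P ∈ tp.classes, ∀ i ∈ P, ∀ j ∈ P, x i = x j) ∧
       (∀ P Q, tp.star P = some Q → ∀ i ∈ P, ∀ j ∈ Q, x i = - x j)}

/-- `Δ_tp` is a synchrony subspace: the partial involution is the empty function. -/
def TaggedPartition.IsSynchrony {n : ℕ} (tp : TaggedPartition n) : Prop :=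
  ∀ P, tp.star P = none

/-- Fully tagged: the partial involution is defined on every class. -/
def TaggedPartition.FullyTagged {n : ℕ} (tp : TaggedPartition n) : Prop :=
  ∀ P ∈ tp.classes, tp.star P ≠ none

/-- Evenly tagged: fully tagged and `#P = #P*` for every class `P`. -/
def TaggedPartition.EvenlyTagged {n : ℕ} (tp : TaggedPartition n) : Prop :=
  tp.FullyTagged ∧ ∀ P Q, tp.star P = some Q → P.ncard = Q.ncard

/-- Proposition 3.10. For `n ≥ 1`, `Δ_tp` is an evenly tagged
anti-synchrony subspace iff the all-ones vector is orthogonal to `Δ_tp`,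
i.e. `∑ i, x i = 0` for every `x ∈ Δ_tp`. -/
theorem evenlyTagged_antiSynchrony_iff_sum_eq_zero {n : ℕ} (hn : 1 ≤ n)
    (tp : TaggedPartition n) :
    (¬ tp.IsSynchrony ∧ tp.EvenlyTagged) ↔ ∀ x ∈ tp.polydiag, ∑ i, x i = 0 := by
  classical
  -- the class of an element
  obtain ⟨cl, hcl1, hcl2⟩ : ∃ cl : Fin n → Set (Fin n),
      (∀ i, cl i ∈ tp.classes) ∧ (∀ i, i ∈ cl i) := by
    choose cl h1 h2 using tp.cover
    exact ⟨cl, h1, h2⟩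
  have hcl_eq : ∀ P ∈ tp.classes, ∀ i ∈ P, cl i = P := fun P hP i hi =>
    tp.eq_of_inter _ (hcl1 i) _ hP ⟨i, hcl2 i, hi⟩
  -- the finset of classes
  set s : Finset (Set (Fin n)) := Finset.univ.image cl with hs
  have hmem_s : ∀ P, P ∈ s ↔ P ∈ tp.classes := by
    intro P
    constructor
    · intro hP
      obtain ⟨i, _, rfl⟩ := Finset.mem_image.1 hP
      exact hcl1 i
    · intro hP
      obtain ⟨i, hi⟩ := tp.classes_nonempty P hP
      exact Finset.mem_image.2 ⟨i, Finset.mem_univ i, hcl_eq P hP i hi⟩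
  have hfiber : ∀ P ∈ tp.classes,
      (Finset.univ.filter (fun i => cl i = P) : Finset (Fin n)) = {i | i ∈ P}.toFinset := by
    intro P hP
    ext i
    simp only [Finset.mem_filter, Finset.mem_univ, true_and, Set.mem_toFinset, Set.mem_setOf_eq]
    constructor
    · rintro rfl; exact hcl2 i
    · intro hi; exact hcl_eq P hP i hi
  have hfiber_card : ∀ P ∈ tp.classes,
      (Finset.univ.filter (fun i => cl i = P)).card = P.ncard := by
    intro P hP
    rw [hfiber P hP]
    rw [← Set.ncard_coe_finset]
    congr 1
    ext i; simp
  constructor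
  · rintro ⟨-, hfull, heven⟩ x ⟨hx1, hx2⟩
    -- star as a total function
    have hst : ∀ P ∈ tp.classes, tp.star P = some ((tp.star P).getD ∅) := by
      intro P hP
      cases h : tp.star P with
      | none => exact absurd h (hfull P hP)
      | some Q => simp [h]
    rw [← Finset.sum_fiberwise_of_maps_to (t := s) (g := cl)
      (fun i _ => Finset.mem_image.2 ⟨i, Finset.mem_univ i, rfl⟩) x]
    refine Finset.sum_involution (fun P _ => (tp.star P).getD ∅) ?_ ?_ ?_ ?_
    · -- pair sums cancel
      intro P hPs
      have hP : P ∈ tp.classes := (hmem_s P).1 hPs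
      set Q := (tp.star P).getD ∅ with hQdef
      have hPQ : tp.star P = some Q := hst P hP
      have hQ : Q ∈ tp.classes := tp.star_ran P Q hPQ
      obtain ⟨j0, hj0⟩ := tp.classes_nonempty Q hQ
      have hsum1 : ∑ i ∈ Finset.univ.filter (fun i => cl i = P), x i
          = P.ncard • (- x j0) := by
        rw [← hfiber_card P hP, ← Finset.sum_const]
        refine Finset.sum_congr rfl fun i hi => ?_
        have : i ∈ P := by
          have := (Finset.mem_filter.1 hi).2; rw [← this]; exact hcl2 i
        exact hx2 P Q hPQ i this j0 hj0
      have hsum2 : ∑ i ∈ Finset.univ.filter (fun i => cl i = Q), x i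
          = Q.ncard • x j0 := by
        rw [← hfiber_card Q hQ, ← Finset.sum_const]
        refine Finset.sum_congr rfl fun i hi => ?_
        have : i ∈ Q := by
          have := (Finset.mem_filter.1 hi).2; rw [← this]; exact hcl2 i
        exact hx1 Q hQ i this j0 hj0
      rw [hsum1, hsum2, heven P Q hPQ, smul_neg, neg_add_cancel]
    · -- fixed point forces zero sum
      intro P hPs hne
      have hP : P ∈ tp.classes := (hmem_s P).1 hPs
      intro hfix
      apply hne
      have hfix' : (tp.star P).getD ∅ = P := hfix
      have hPQ : tp.star P = some P := by
        have := hst P hP; rwa [hfix'] at this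
      refine Finset.sum_eq_zero fun i hi => ?_
      have hiP : i ∈ P := by
        have := (Finset.mem_filter.1 hi).2; rw [← this]; exact hcl2 i
      have := hx2 P P hPQ i hiP i hiP
      linarith
    · -- star maps classes to classes
      intro P hPs
      have hP : P ∈ tp.classes := (hmem_s P).1 hPs
      exact (hmem_s _).2 (tp.star_ran P _ (hst P hP))
    · -- involution
      intro P hPs
      have hP : P ∈ tp.classes := (hmem_s P).1 hPs
      have hPQ : tp.star P = some ((tp.star P).getD ∅) := hst P hP
      have h2 := tp.star_invol P _ hPQ
      show (tp.star ((tp.star P).getD ∅)).getD ∅ = P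
      rw [h2]
      rfl
  · intro h
    -- First: fully tagged
    have hfull : tp.FullyTagged := by
      intro P0 hP0 hnone
      -- indicator of P0 lies in polydiag
      have hxmem : (fun i => if i ∈ P0 then (1:ℝ) else 0) ∈ tp.polydiag := by
        constructor
        · intro P hP i hi j hj
          by_cases hPP0 : P = P0
          · subst hPP0; simp [hi, hj]
          · have hi' : i ∉ P0 := fun h' => hPP0 (tp.eq_of_inter P hP P0 hP0 ⟨i, hi, h'⟩)
            have hj' : j ∉ P0 := fun h' => hPP0 (tp.eq_of_inter P hP P0 hP0 ⟨j, hj, h'⟩)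
            simp [hi', hj']
        · intro P Q hPQ i hi j hj
          have hPc : P ∈ tp.classes := tp.star_dom P (by simp [hPQ])
          have hQc : Q ∈ tp.classes := tp.star_ran P Q hPQ
          have hPne : P ≠ P0 := fun h' => by rw [h'] at hPQ; rw [hnone] at hPQ; exact absurd hPQ (by simp)
          have hQne : Q ≠ P0 := by
            intro h'
            have h2 := tp.star_invol P Q hPQ
            rw [h', hnone] at h2
            exact absurd h2 (by simp)
          have hi' : i ∉ P0 := fun h' => hPne (tp.eq_of_inter P hPc P0 hP0 ⟨i, hi, h'⟩)
          have hj' : j ∉ P0 := fun h' => hQne (tp.eq_of_inter Q hQc P0 hP0 ⟨j, hj, h'⟩)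
          simp [hi', hj']
      have hsum := h _ hxmem
      have : ∑ i : Fin n, (if i ∈ P0 then (1:ℝ) else 0)
          = ((Finset.univ.filter (fun i => i ∈ P0)).card : ℝ) := by
        rw [Finset.sum_boole]
      rw [this] at hsum
      have hcardpos : 0 < (Finset.univ.filter (fun i => i ∈ P0)).card := by
        obtain ⟨i, hi⟩ := tp.classes_nonempty P0 hP0
        exact Finset.card_pos.2 ⟨i, by simp [hi]⟩
      rw [Nat.cast_eq_zero] at hsum
      omega
    -- Second: not synchrony
    have hnsync : ¬ tp.IsSynchrony := by
      intro hsync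
      obtain ⟨P, hP, -⟩ := tp.cover ⟨0, hn⟩
      exact hfull P hP (hsync P)
    -- Third: evenly tagged
    refine ⟨hnsync, hfull, fun P Q hPQ => ?_⟩
    by_contra hne
    have hPc : P ∈ tp.classes := tp.star_dom P (by simp [hPQ])
    have hQc : Q ∈ tp.classes := tp.star_ran P Q hPQ
    have hPQne : P ≠ Q := fun h' => hne (by rw [h'])
    have hdisj : ∀ i, ¬ (i ∈ P ∧ i ∈ Q) := by
      rintro i ⟨hiP, hiQ⟩
      exact hPQne (tp.eq_of_inter P hPc Q hQc ⟨i, hiP, hiQ⟩)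
    set x : Fin n → ℝ := fun i => if i ∈ P then 1 else if i ∈ Q then -1 else 0 with hx
    have hxmem : x ∈ tp.polydiag := by
      constructor
      · intro A hA i hi j hj
        by_cases hAP : A = P
        · subst hAP; simp [hx, hi, hj]
        · have hi' : i ∉ P := fun h' => hAP (tp.eq_of_inter A hA P hPc ⟨i, hi, h'⟩)
          have hj' : j ∉ P := fun h' => hAP (tp.eq_of_inter A hA P hPc ⟨j, hj, h'⟩)
          by_cases hAQ : A = Q
          · subst hAQ; simp [hx, hi, hj, hi', hj']
          · have hi'' : i ∉ Q := fun h' => hAQ (tp.eq_of_inter A hA Q hQc ⟨i, hi, h'⟩)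
            have hj'' : j ∉ Q := fun h' => hAQ (tp.eq_of_inter A hA Q hQc ⟨j, hj, h'⟩)
            simp [hx, hi', hj', hi'', hj'']
      · intro A B hAB i hi j hj
        have hAc : A ∈ tp.classes := tp.star_dom A (by simp [hAB])
        have hBc : B ∈ tp.classes := tp.star_ran A B hAB
        by_cases hAP : A = P
        · have hBQ : B = Q := by
            rw [hAP, hPQ] at hAB
            exact (Option.some.inj hAB).symm
          have hi' : i ∈ P := hAP ▸ hi
          have hj' : j ∈ Q := hBQ ▸ hj
          have hj'' : j ∉ P := fun h' => (hdisj j ⟨h', hj'⟩)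
          simp [hx, hi', hj', hj'']
        · by_cases hAQ : A = Q
          · have hBP : B = P := by
              have h2 := tp.star_invol P Q hPQ
              rw [hAQ, h2] at hAB
              exact (Option.some.inj hAB).symm
            have hi' : i ∈ Q := hAQ ▸ hi
            have hj' : j ∈ P := hBP ▸ hj
            have hi'' : i ∉ P := fun h' => (hdisj i ⟨h', hi'⟩)
            simp [hx, hi', hj', hi'']
          · -- A ∉ {P, Q}, show B ∉ {P, Q} too
            have hBP : B ≠ P := by
              intro h'
              have h2 := tp.star_invol A B hAB
              rw [h', hPQ] at h2
              exact hAQ (Option.some.inj h2).symm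
            have hBQ : B ≠ Q := by
              intro h'
              have h2 := tp.star_invol A B hAB
              have h3 := tp.star_invol P Q hPQ
              rw [h', h3] at h2
              exact hAP (Option.some.inj h2).symm
            have hi1 : i ∉ P := fun h' => hAP (tp.eq_of_inter A hAc P hPc ⟨i, hi, h'⟩)
            have hi2 : i ∉ Q := fun h' => hAQ (tp.eq_of_inter A hAc Q hQc ⟨i, hi, h'⟩)
            have hj1 : j ∉ P := fun h' => hBP (tp.eq_of_inter B hBc P hPc ⟨j, hj, h'⟩)
            have hj2 : j ∉ Q := fun h' => hBQ (tp.eq_of_inter B hBc Q hQc ⟨j, hj, h'⟩)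
            simp [hx, hi1, hi2, hj1, hj2]
    have hsum := h x hxmem
    have hcards : ∀ (S : Set (Fin n)), (Finset.univ.filter (fun i => i ∈ S)).card = S.ncard := by
      intro S
      rw [← Set.ncard_coe_finset]
      congr 1
      ext i; simp
    have hsplit : ∑ i, x i = (P.ncard : ℝ) - (Q.ncard : ℝ) := by
      have : ∀ i : Fin n, x i = (if i ∈ P then (1:ℝ) else 0) + (if i ∈ Q then (-1:ℝ) else 0) := by
        intro i
        by_cases hiP : i ∈ P
        · have : i ∉ Q := fun h' => hdisj i ⟨hiP, h'⟩
          simp [hx, hiP, this]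
        · by_cases hiQ : i ∈ Q <;> simp [hx, hiP, hiQ]
      rw [Finset.sum_congr rfl (fun i _ => this i), Finset.sum_add_distrib,
        ← Finset.sum_filter, ← Finset.sum_filter]
      simp only [Finset.sum_const, nsmul_eq_mul, mul_one, mul_neg_one]
      rw [hcards P, hcards Q]
      ring
    rw [hsplit] at hsum
    have : P.ncard = Q.ncard := by
      have := sub_eq_zero.1 hsum
      exact_mod_cast this
    exact hne this
end

section
/- Let f : ℝ^k → ℝ^k, H ∈ ℝ^{k×k}, M ∈ ℝ^{n×n}, and let F : (ℝ^k)^n → (ℝ^k)^n be the associated network vector field. Assume N ∈ ℝ^{k×k} satisfies f(Ny) = Nf(y) for all y ∈ ℝ^k and HN = NH = H. For ℓ ∈ {1,…,n} define γ_ℓ : (ℝ^k)^n → (ℝ^k)^n by γ_ℓ(x) = (x_1,…,N x_ℓ,…,x_n) (apply N only in coordinate ℓ). Then F(γ_ℓ(x)) = γ_ℓ(F(x)) for all x ∈ (ℝ^k)^n. -/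
/-- The network vector field `F : (ℝᵏ)ⁿ → (ℝᵏ)ⁿ` with internal dynamics `f`,
coupling matrix `H` and network matrix `M`:
`F_i(x) = f(x_i) + H (∑_j M_{ij} x_j)`. -/
def netF {k n : ℕ} (f : (Fin k → ℝ) → Fin k → ℝ) (H : Matrix (Fin k) (Fin k) ℝ)
    (M : Matrix (Fin n) (Fin n) ℝ) (x : Fin n → Fin k → ℝ) : Fin n → Fin k → ℝ :=
  fun i => f (x i) + H.mulVec (∑ j, M i j • x j)

/-- Proposition 4.8. If `f(Ny) = Nf(y)` for all `y` and
`HN = NH = H`, then `F` commutes with `γ_ℓ`, the map applying `N` in the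
`ℓ`-th coordinate only. -/
theorem netF_comm_gamma {k n : ℕ} (f : (Fin k → ℝ) → Fin k → ℝ)
    (H N : Matrix (Fin k) (Fin k) ℝ) (M : Matrix (Fin n) (Fin n) ℝ)
    (hf : ∀ y : Fin k → ℝ, f (N.mulVec y) = N.mulVec (f y))
    (hHN : H * N = H) (hNH : N * H = H) (ℓ : Fin n) (x : Fin n → Fin k → ℝ) :
    netF f H M (Function.update x ℓ (N.mulVec (x ℓ))) =
      Function.update (netF f H M x) ℓ (N.mulVec (netF f H M x ℓ)) := by
  have key : ∀ i, H.mulVec (∑ j, M i j • Function.update x ℓ (N.mulVec (x ℓ)) j)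
      = H.mulVec (∑ j, M i j • x j) := by
    intro i
    have : ∀ j, H.mulVec (M i j • Function.update x ℓ (N.mulVec (x ℓ)) j)
        = H.mulVec (M i j • x j) := by
      intro j
      by_cases hj : j = ℓ
      · subst hj
        simp [Matrix.mulVec_smul, Matrix.mulVec_mulVec, hHN]
      · simp [Function.update_of_ne hj]
    calc H.mulVec (∑ j, M i j • Function.update x ℓ (N.mulVec (x ℓ)) j)
        = ∑ j, H.mulVec (M i j • Function.update x ℓ (N.mulVec (x ℓ)) j) := by
          simp only [← Matrix.mulVecLin_apply, map_sum]
      _ = ∑ j, H.mulVec (M i j • x j) := by simp [this]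
      _ = H.mulVec (∑ j, M i j • x j) := by simp only [← Matrix.mulVecLin_apply, map_sum]
  funext i
  by_cases hi : i = ℓ
  · subst hi
    simp only [netF, Function.update_self, key i]
    rw [hf, Matrix.mulVec_add, Matrix.mulVec_mulVec, hNH]
  · simp only [netF, Function.update_of_ne hi, key i]
end

section
/- Let f : ℝ^k → ℝ^k, H ∈ ℝ^{k×k}, M ∈ ℝ^{n×n}, and let F : (ℝ^k)^n → (ℝ^k)^n be the associated network vector field. Let 𝒫 be a tagged partition of {1,…,n} such that the polydiagonal subspace Δ_𝒫 ⊆ ℝ^n is M-invariant. Assume N ∈ ℝ^{k×k} satisfies N² = I, f(Ny) = Nf(y) for all y ∈ ℝ^k, and HN = NH = −H. Define Δ_𝒫^N := {(x_1,…,x_n) ∈ (ℝ^k)^n : x_i = x_j whenever [i] = [j], and x_i = N x_j whenever [i] = [j]*}. Then F maps Δ_𝒫^N into itself: F(x) ∈ Δ_𝒫^N for every x ∈ Δ_𝒫^N. -/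
/-- The subspace `Δ_tp^N ⊆ (ℝᵏ)ⁿ`: `x_i = x_j` whenever `[i] = [j]`, and
`x_i = N x_j` whenever `[i] = [j]*`. -/
def TaggedPartition.polydiagN {n k : ℕ} (tp : TaggedPartition n)
    (N : Matrix (Fin k) (Fin k) ℝ) : Set (Fin n → Fin k → ℝ) :=
  {x | (∀ P ∈ tp.classes, ∀ i ∈ P, ∀ j ∈ P, x i = x j) ∧
       (∀ P Q, tp.star Q = some P → ∀ i ∈ P, ∀ j ∈ Q, x i = N.mulVec (x j))}

/-- Proposition 4.11. Suppose `Δ_tp` is `M`-invariant, `N² = I`,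
`f(Ny) = Nf(y)` for all `y`, and `HN = NH = −H`. Then `F` maps `Δ_tp^N` into itself. -/
theorem netF_maps_polydiagN {k n : ℕ} (f : (Fin k → ℝ) → Fin k → ℝ)
    (H N : Matrix (Fin k) (Fin k) ℝ) (M : Matrix (Fin n) (Fin n) ℝ)
    (tp : TaggedPartition n)
    (hMinv : ∀ x ∈ tp.polydiag, M.mulVec x ∈ tp.polydiag)
    (hN2 : N * N = 1)
    (hf : ∀ y : Fin k → ℝ, f (N.mulVec y) = N.mulVec (f y))
    (hHN : H * N = -H) (hNH : N * H = -H) :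
    ∀ x ∈ tp.polydiagN N, netF f H M x ∈ tp.polydiagN N := by
  intro x hx
  obtain ⟨hx1, hx2⟩ := hx
  have hHNv : ∀ v, H.mulVec (N.mulVec v) = -(H.mulVec v) := by
    intro v
    rw [Matrix.mulVec_mulVec, hHN, Matrix.neg_mulVec]
  have hNHv : ∀ v, N.mulVec (H.mulVec v) = -(H.mulVec v) := by
    intro v
    rw [Matrix.mulVec_mulVec, hNH, Matrix.neg_mulVec]
  set m : Fin n → Fin k → ℝ := fun l => x l - N.mulVec (x l) with hm
  have hmem : ∀ c : Fin k, (fun l => m l c) ∈ tp.polydiag := by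
    intro c
    constructor
    · intro P hP i hi j hj
      simp only [hm]
      rw [hx1 P hP i hi j hj]
    · intro P Q hPQ i hi j hj
      have hQP : tp.star Q = some P := tp.star_invol P Q hPQ
      have hxij : x i = N.mulVec (x j) := hx2 P Q hQP i hi j hj
      have hN2v : N.mulVec (N.mulVec (x j)) = x j := by
        rw [Matrix.mulVec_mulVec, hN2, Matrix.one_mulVec]
      simp only [hm, Pi.sub_apply]
      rw [hxij, hN2v]
      ring
  set w : Fin n → Fin k → ℝ := fun i c => M.mulVec (fun l => m l c) i with hw
  have hwmem : ∀ c : Fin k, (fun i => w i c) ∈ tp.polydiag := by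
    intro c
    exact hMinv _ (hmem c)
  have hwsum : ∀ i, w i = ∑ l, M i l • m l := by
    intro i
    funext c
    simp [hw, Matrix.mulVec, dotProduct, Finset.sum_apply]
  have hlin : ∀ (g : Fin n → Fin k → ℝ), H.mulVec (∑ l, g l) = ∑ l, H.mulVec (g l) := by
    intro g
    funext d
    simp only [Matrix.mulVec, dotProduct, Finset.sum_apply, Finset.mul_sum]
    rw [Finset.sum_comm]
  have hsmul : ∀ (c : ℝ) (v : Fin k → ℝ), H.mulVec (c • v) = c • H.mulVec v := by
    intro c v
    exact Matrix.mulVec_smul H c v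
  have hHm : ∀ l, H.mulVec (m l) = (2:ℝ) • H.mulVec (x l) := by
    intro l
    simp only [hm]
    rw [Matrix.mulVec_sub, hHNv, sub_neg_eq_add, two_smul]
  have hkey : ∀ i, H.mulVec (∑ l, M i l • x l) = (2:ℝ)⁻¹ • H.mulVec (w i) := by
    intro i
    rw [hlin, hwsum, hlin, Finset.smul_sum]
    apply Finset.sum_congr rfl
    intro l _
    rw [hsmul, hsmul, hHm]
    rw [smul_smul, smul_smul]
    congr 1
    ring
  constructor
  · intro P hP i hi j hj
    have hxeq := hx1 P hP i hi j hj
    have hweq : w i = w j := funext fun c => (hwmem c).1 P hP i hi j hj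
    simp only [netF]
    rw [hxeq, hkey i, hkey j, hweq]
  · intro P Q hPQ i hi j hj
    have hxij : x i = N.mulVec (x j) := hx2 P Q hPQ i hi j hj
    have hPQ' : tp.star P = some Q := tp.star_invol Q P hPQ
    have hwneg : w i = -(w j) := by
      funext c
      simpa using (hwmem c).2 P Q hPQ' i hi j hj
    simp only [netF]
    rw [hxij, hf, hkey i, hkey j, hwneg, Matrix.mulVec_neg, Matrix.mulVec_add,
      Matrix.mulVec_smul, hNHv, smul_neg]
end

section
/- Let H ∈ ℝ^{k×k} be nonzero, M ∈ ℝ^{n×n}, and let W be a linear subspace of (ℝ^k)^n. Then the following are equivalent: (i) for every odd function f : ℝ^k → ℝ^k the map (x_1,…,x_n) ↦ (f(x_1),…,f(x_n)) sends W into W, and the linear map x ↦ (H ∑_{j} M_{1j} x_j, …, H ∑_{j} M_{nj} x_j) sends W into W; (ii) there is a tagged partition 𝒫 of {1,…,n} such that Δ_𝒫 is M-invariant and W = ℝ^k ⊗ Δ_𝒫. -/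
/-- The subspace `ℝᵏ ⊗ Δ_tp ⊆ (ℝᵏ)ⁿ`: `x_i = x_j` whenever `[i] = [j]`, and
`x_i = -x_j` whenever `[i]* = [j]`. -/
def TaggedPartition.polydiagV {n : ℕ} (tp : TaggedPartition n) (k : ℕ) :
    Set (Fin n → Fin k → ℝ) :=
  {x | (∀ P ∈ tp.classes, ∀ i ∈ P, ∀ j ∈ P, x i = x j) ∧
       (∀ P Q, tp.star P = some Q → ∀ i ∈ P, ∀ j ∈ Q, x i = - x j)}

namespace PolyAux

variable {k n : ℕ} (W : Submodule ℝ (Fin n → Fin k → ℝ))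

def rel (i j : Fin n) : Prop := ∀ x ∈ W, x i = x j
def nrel (i j : Fin n) : Prop := ∀ x ∈ W, x i = - x j

lemma rel_refl (i : Fin n) : rel W i i := fun _ _ => rfl
lemma rel_symm {i j} (h : rel W i j) : rel W j i := fun x hx => (h x hx).symm
lemma rel_trans {i j l} (h : rel W i j) (h' : rel W j l) : rel W i l :=
  fun x hx => (h x hx).trans (h' x hx)
lemma nrel_symm {i j} (h : nrel W i j) : nrel W j i := fun x hx => by
  rw [h x hx, neg_neg]
lemma rel_nrel {i j l} (h : rel W i j) (h' : nrel W j l) : nrel W i l :=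
  fun x hx => (h x hx).trans (h' x hx)

def cls (i : Fin n) : Set (Fin n) := {j | rel W i j}

lemma mem_cls_self (i : Fin n) : i ∈ cls W i := rel_refl W i

lemma cls_eq {i j} (h : rel W i j) : cls W i = cls W j := by
  ext l
  exact ⟨fun hl => rel_trans W (rel_symm W h) hl, fun hl => rel_trans W h hl⟩

def img (P : Set (Fin n)) : Set (Fin n) := {j | ∃ i ∈ P, nrel W i j}

def classes : Set (Set (Fin n)) := {S | ∃ i, S = cls W i}

noncomputable def pstar (P : Set (Fin n)) : Option (Set (Fin n)) :=
  letI := Classical.propDecidable (P ∈ classes W ∧ ∃ i ∈ P, ∃ j, nrel W i j)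
  if P ∈ classes W ∧ ∃ i ∈ P, ∃ j, nrel W i j then some (img W P) else none

lemma pstar_spec (P Q : Set (Fin n)) (h : pstar W P = some Q) :
    P ∈ classes W ∧ (∃ i ∈ P, ∃ j, nrel W i j) ∧ Q = img W P := by
  unfold pstar at h
  split_ifs at h with hc
  exact ⟨hc.1, hc.2, (Option.some_injective _ h).symm⟩

lemma pstar_eq_some (P : Set (Fin n)) (hc : P ∈ classes W ∧ ∃ i ∈ P, ∃ j, nrel W i j) :
    pstar W P = some (img W P) := by
  unfold pstar
  rw [if_pos hc]

lemma img_eq_cls {P : Set (Fin n)} {i0 j0 : Fin n} (hP : P ∈ classes W) (hi0 : i0 ∈ P)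
    (hn : nrel W i0 j0) : img W P = cls W j0 := by
  obtain ⟨a, rfl⟩ := hP
  ext j
  constructor
  · rintro ⟨i', hi', hn'⟩
    have h1 : nrel W i0 j := rel_nrel W (rel_trans W (rel_symm W hi0) hi') hn'
    intro x hx
    have e1 : x j0 = - x i0 := by rw [hn x hx, neg_neg]
    rw [e1, h1 x hx, neg_neg]
  · intro hj
    exact ⟨i0, hi0, fun x hx => by rw [hn x hx, hj x hx]⟩

noncomputable def tp : TaggedPartition n where
  classes := classes W
  classes_nonempty := by rintro P ⟨i, rfl⟩; exact ⟨i, mem_cls_self W i⟩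
  cover := fun i => ⟨cls W i, ⟨i, rfl⟩, mem_cls_self W i⟩
  eq_of_inter := by
    rintro P ⟨a, rfl⟩ Q ⟨b, rfl⟩ ⟨m, hma, hmb⟩
    rw [cls_eq W hma, cls_eq W hmb]
  star := pstar W
  star_dom := by
    intro P h
    cases hs : pstar W P with
    | none => exact absurd hs h
    | some Q => exact (pstar_spec W P Q hs).1
  star_ran := by
    intro P Q h
    obtain ⟨hP, ⟨i0, hi0, j0, hn⟩, rfl⟩ := pstar_spec W P Q h
    rw [img_eq_cls W hP hi0 hn]
    exact ⟨j0, rfl⟩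
  star_invol := by
    intro P Q h
    obtain ⟨hP, ⟨i0, hi0, j0, hn⟩, rfl⟩ := pstar_spec W P Q h
    have hQ : img W P = cls W j0 := img_eq_cls W hP hi0 hn
    have hj0Q : j0 ∈ img W P := ⟨i0, hi0, hn⟩
    have hc : img W P ∈ classes W ∧ ∃ i ∈ img W P, ∃ j, nrel W i j :=
      ⟨⟨j0, hQ⟩, j0, hj0Q, i0, nrel_symm W hn⟩
    rw [pstar_eq_some W _ hc]
    congr 1
    rw [img_eq_cls W hc.1 hj0Q (nrel_symm W hn)]
    obtain ⟨a, rfl⟩ := hP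
    exact (cls_eq W hi0).symm
  star_fixed := by
    have key : ∀ P : Set (Fin n), pstar W P = some P → ∀ i ∈ P, ∀ x ∈ W, x i = 0 := by
      intro P hPP i hi x hx
      obtain ⟨hPc, _, hPi⟩ := pstar_spec W P P hPP
      have hi' : i ∈ img W P := hPi ▸ hi
      obtain ⟨i1, hi1, hn1⟩ := hi'
      obtain ⟨a, ha⟩ := hPc
      have hrel : rel W i1 i := by
        subst ha
        exact rel_trans W (rel_symm W hi1) hi
      have e1 := hn1 x hx
      have e2 := hrel x hx
      have e3 : x i = - x i := e2.symm.trans e1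
      funext c
      have := congrFun e3 c
      rw [Pi.neg_apply] at this
      have : x i c = 0 := by linarith
      simpa using this
    intro P Q hP hQ
    obtain ⟨⟨a, ha⟩, _, _⟩ := pstar_spec W P P hP
    obtain ⟨⟨b, hb⟩, _, _⟩ := pstar_spec W Q Q hQ
    have hab : rel W a b := by
      intro x hx
      rw [key P hP a (ha ▸ mem_cls_self W a) x hx, key Q hQ b (hb ▸ mem_cls_self W b) x hx]
    rw [ha, hb, cls_eq W hab]

lemma subset_polydiagV : (W : Set (Fin n → Fin k → ℝ)) ⊆ (tp W).polydiagV k := by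
  intro x hx
  refine ⟨?_, ?_⟩
  · rintro P ⟨a, rfl⟩ i hi j hj
    exact rel_trans W (rel_symm W hi) hj x hx
  · intro P Q hPQ i hi j hj
    obtain ⟨hP, _, rfl⟩ := pstar_spec W P Q hPQ
    obtain ⟨i', hi', hn'⟩ := hj
    obtain ⟨a, rfl⟩ := hP
    exact rel_nrel W (rel_trans W (rel_symm W hi) hi') hn' x hx

lemma polydiagV_rel {x : Fin n → Fin k → ℝ} (hx : x ∈ (tp W).polydiagV k) {i j : Fin n}
    (h : rel W i j) : x i = x j :=
  hx.1 (cls W i) ⟨i, rfl⟩ i (mem_cls_self W i) j h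

lemma polydiagV_nrel {x : Fin n → Fin k → ℝ} (hx : x ∈ (tp W).polydiagV k) {i j : Fin n}
    (h : nrel W i j) : x i = - x j := by
  have hc : cls W i ∈ classes W ∧ ∃ i' ∈ cls W i, ∃ j', nrel W i' j' :=
    ⟨⟨i, rfl⟩, i, mem_cls_self W i, j, h⟩
  exact hx.2 _ _ (pstar_eq_some W _ hc) i (mem_cls_self W i) j ⟨i, mem_cls_self W i, h⟩

def isGood (p : Fin n × Fin n × Bool) : Prop :=
  if p.2.2 then nrel W p.1 p.2.1 else rel W p.1 p.2.1

lemma isGood_false {i j : Fin n} : isGood W (i, j, false) ↔ rel W i j := by simp [isGood]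
lemma isGood_true {i j : Fin n} : isGood W (i, j, true) ↔ nrel W i j := by simp [isGood]

noncomputable def Tsub (p : Fin n × Fin n × Bool) : Submodule ℝ (Fin n → Fin k → ℝ) :=
  if p.2.2 then
    LinearMap.ker ((LinearMap.proj p.1 : (Fin n → Fin k → ℝ) →ₗ[ℝ] (Fin k → ℝ)) +
      LinearMap.proj p.2.1)
  else
    LinearMap.ker ((LinearMap.proj p.1 : (Fin n → Fin k → ℝ) →ₗ[ℝ] (Fin k → ℝ)) -
      LinearMap.proj p.2.1)

lemma mem_Tsub_false {i j : Fin n} {x : Fin n → Fin k → ℝ} :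
    x ∈ Tsub (k := k) (i, j, false) ↔ x i = x j := by
  simp [Tsub, LinearMap.mem_ker, sub_eq_zero]

lemma mem_Tsub_true {i j : Fin n} {x : Fin n → Fin k → ℝ} :
    x ∈ Tsub (k := k) (i, j, true) ↔ x i = - x j := by
  simp [Tsub, LinearMap.mem_ker, add_eq_zero_iff_eq_neg]

lemma exists_generic :
    ∃ w ∈ W, (∀ i j, w i = w j → rel W i j) ∧ (∀ i j, w i = - w j → nrel W i j) := by
  classical
  by_cases hall : ∀ w : ↥W, ∃ p : {p : Fin n × Fin n × Bool // ¬ isGood W p},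
      (w : Fin n → Fin k → ℝ) ∈ Tsub p.1
  · exfalso
    have hcov : ⋃ p : {p : Fin n × Fin n × Bool // ¬ isGood W p},
        ((Submodule.comap W.subtype (Tsub p.1) : Submodule ℝ ↥W) : Set ↥W) = Set.univ := by
      rw [Set.iUnion_eq_univ_iff]
      intro w
      obtain ⟨p, hp⟩ := hall w
      exact ⟨p, Submodule.mem_comap.mpr hp⟩
    obtain ⟨⟨⟨i, j, b⟩, hbad⟩, hp⟩ := Subspace.exists_eq_top_of_iUnion_eq_univ hcov
    have hmem : ∀ x ∈ W, x ∈ Tsub (k := k) (i, j, b) := by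
      intro x hx
      have : (⟨x, hx⟩ : ↥W) ∈ Submodule.comap W.subtype (Tsub (i, j, b)) := by
        rw [hp]; trivial
      exact Submodule.mem_comap.mp this
    cases b
    · exact hbad ((isGood_false W).mpr (fun x hx => mem_Tsub_false.mp (hmem x hx)))
    · exact hbad ((isGood_true W).mpr (fun x hx => mem_Tsub_true.mp (hmem x hx)))
  · push_neg at hall
    obtain ⟨w, hw⟩ := hall
    refine ⟨w.1, w.2, ?_, ?_⟩
    · intro i j hij
      by_contra hrel
      exact hw ⟨(i, j, false), fun hg => hrel ((isGood_false W).mp hg)⟩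
        (mem_Tsub_false.mpr hij)
    · intro i j hij
      by_contra hnrel
      exact hw ⟨(i, j, true), fun hg => hnrel ((isGood_true W).mp hg)⟩
        (mem_Tsub_true.mpr hij)

noncomputable def oddExt (w x : Fin n → Fin k → ℝ) : (Fin k → ℝ) → (Fin k → ℝ) := fun y =>
  if h : ∃ i, y = w i then x h.choose
  else if h2 : ∃ i, y = - w i then - x h2.choose
  else 0

variable {w x : Fin n → Fin k → ℝ}

lemma oddExt_w (hc : ∀ i j, w i = w j → x i = x j) (i : Fin n) : oddExt w x (w i) = x i := by
  have h : ∃ i', w i = w i' := ⟨i, rfl⟩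
  simp only [oddExt]
  rw [dif_pos h]
  exact hc _ _ h.choose_spec.symm

lemma oddExt_neg_w (hc : ∀ i j, w i = w j → x i = x j)
    (hn : ∀ i j, w i = - w j → x i = - x j) (i : Fin n) :
    oddExt w x (-(w i)) = - x i := by
  simp only [oddExt]
  by_cases h : ∃ i', -(w i) = w i'
  · rw [dif_pos h]
    have hcs : w h.choose = - w i := h.choose_spec.symm
    exact hn _ _ hcs
  · rw [dif_neg h]
    have h2 : ∃ i', -(w i) = - w i' := ⟨i, rfl⟩
    rw [dif_pos h2]
    have hww : w i = w h2.choose := neg_injective h2.choose_spec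
    exact congrArg Neg.neg (hc _ _ hww.symm)

lemma oddExt_odd (hc : ∀ i j, w i = w j → x i = x j)
    (hn : ∀ i j, w i = - w j → x i = - x j) :
    ∀ y, oddExt w x (-y) = - oddExt w x y := by
  intro y
  by_cases h1 : ∃ i, y = w i
  · obtain ⟨i, rfl⟩ := h1
    rw [oddExt_neg_w hc hn i, oddExt_w hc i]
  · by_cases h2 : ∃ i, y = - w i
    · obtain ⟨i, rfl⟩ := h2
      rw [neg_neg, oddExt_w hc i, oddExt_neg_w hc hn i, neg_neg]
    · have hA : ¬ ∃ i, -y = w i := by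
        rintro ⟨i, hi⟩
        exact h2 ⟨i, by rw [← hi, neg_neg]⟩
      have hB : ¬ ∃ i, -y = - w i := by
        rintro ⟨i, hi⟩
        exact h1 ⟨i, neg_injective hi⟩
      simp only [oddExt]
      rw [dif_neg hA, dif_neg hB, dif_neg h1, dif_neg h2, neg_zero]

lemma polydiagV_subset
    (hodd : ∀ f : (Fin k → ℝ) → Fin k → ℝ, (∀ y, f (-y) = -f y) →
      ∀ x ∈ W, (fun i => f (x i)) ∈ W) :
    (tp W).polydiagV k ⊆ (W : Set (Fin n → Fin k → ℝ)) := by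
  obtain ⟨w, hwW, hw1, hw2⟩ := exists_generic W
  intro x hx
  have hc : ∀ i j, w i = w j → x i = x j := fun i j h => polydiagV_rel W hx (hw1 i j h)
  have hn : ∀ i j, w i = - w j → x i = - x j := fun i j h => polydiagV_nrel W hx (hw2 i j h)
  have hmem := hodd (oddExt w x) (oddExt_odd hc hn) w hwW
  have hfx : (fun i => oddExt w x (w i)) = x := funext fun i => oddExt_w hc i
  rwa [hfx] at hmem

lemma polydiag_invariant (H : Matrix (Fin k) (Fin k) ℝ) (hH : H ≠ 0)
    (M : Matrix (Fin n) (Fin n) ℝ)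
    (hcoup : ∀ x ∈ W, (fun i => H.mulVec (∑ j, M i j • x j)) ∈ W)
    (hWeq : (W : Set (Fin n → Fin k → ℝ)) = (tp W).polydiagV k) :
    ∀ y ∈ (tp W).polydiag, M.mulVec y ∈ (tp W).polydiag := by
  have hex : ∃ e : Fin k → ℝ, H.mulVec e ≠ 0 := by
    by_contra hcon
    push_neg at hcon
    apply hH
    ext c d
    have h1 := congrFun (hcon (Pi.single d 1)) c
    rw [Matrix.mulVec_single] at h1
    simpa using h1
  obtain ⟨e, he⟩ := hex
  obtain ⟨c, hc0⟩ : ∃ c, H.mulVec e c ≠ 0 := by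
    by_contra hcon
    push_neg at hcon
    exact he (funext hcon)
  intro y hy
  have hxW : (fun i => y i • e) ∈ W := by
    rw [← SetLike.mem_coe, hWeq]
    refine ⟨?_, ?_⟩
    · intro P hP i hi j hj
      show y i • e = y j • e
      rw [hy.1 P hP i hi j hj]
    · intro P Q hPQ i hi j hj
      show y i • e = -(y j • e)
      rw [hy.2 P Q hPQ i hi j hj, neg_smul]
  have hgW := hcoup _ hxW
  have heq : (fun i => H.mulVec (∑ j, M i j • (fun i' => y i' • e) j)) =
      (fun i => (M.mulVec y i) • (H.mulVec e)) := by
    funext i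
    have h1 : (∑ j, M i j • (fun i' => y i' • e) j) = (∑ j, M i j * y j) • e := by
      rw [Finset.sum_smul]
      exact Finset.sum_congr rfl fun j _ => smul_smul _ _ _
    rw [h1, Matrix.mulVec_smul]
    congr 1
  rw [heq, ← SetLike.mem_coe, hWeq] at hgW
  refine ⟨?_, ?_⟩
  · intro P hP i hi j hj
    have h2 := congrFun (hgW.1 P hP i hi j hj) c
    simp only [Pi.smul_apply, smul_eq_mul] at h2
    exact mul_right_cancel₀ hc0 h2
  · intro P Q hPQ i hi j hj
    have h2 := congrFun (hgW.2 P Q hPQ i hi j hj) c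
    simp only [Pi.smul_apply, Pi.neg_apply, smul_eq_mul] at h2
    have h3 : M.mulVec y i * H.mulVec e c = (- M.mulVec y j) * H.mulVec e c := by
      rw [h2, neg_mul]
    exact mul_right_cancel₀ hc0 h3

end PolyAux

/-- Proposition 4.4(1). For nonzero `H`, a subspace
`W ⊆ (ℝᵏ)ⁿ` is invariant under all diagonal maps built from odd `f` and under the
linear coupling map iff `W = ℝᵏ ⊗ Δ_tp` for some `M`-invariant polydiagonal
subspace `Δ_tp`. -/


theorem invariant_all_odd_iff_polydiagV {k n : ℕ}
    (H : Matrix (Fin k) (Fin k) ℝ) (hH : H ≠ 0) (M : Matrix (Fin n) (Fin n) ℝ)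
    (W : Submodule ℝ (Fin n → Fin k → ℝ)) :
    ((∀ f : (Fin k → ℝ) → Fin k → ℝ, (∀ y, f (-y) = -f y) →
        ∀ x ∈ W, (fun i => f (x i)) ∈ W) ∧
      (∀ x ∈ W, (fun i => H.mulVec (∑ j, M i j • x j)) ∈ W)) ↔
    (∃ tp : TaggedPartition n,
      (∀ x ∈ tp.polydiag, M.mulVec x ∈ tp.polydiag) ∧
      (W : Set (Fin n → Fin k → ℝ)) = tp.polydiagV k) := by
  constructor
  · rintro ⟨hodd, hcoup⟩
    have hWeq : (W : Set (Fin n → Fin k → ℝ)) = (PolyAux.tp W).polydiagV k :=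
      Set.Subset.antisymm (PolyAux.subset_polydiagV W) (PolyAux.polydiagV_subset W hodd)
    exact ⟨PolyAux.tp W, PolyAux.polydiag_invariant W H hH M hcoup hWeq, hWeq⟩
  · rintro ⟨tp, hM, hWeq⟩
    constructor
    · intro f hf x hx
      rw [← SetLike.mem_coe, hWeq] at hx ⊢
      refine ⟨?_, ?_⟩
      · intro P hP i hi j hj
        show f (x i) = f (x j)
        rw [hx.1 P hP i hi j hj]
      · intro P Q hPQ i hi j hj
        show f (x i) = - f (x j)
        rw [hx.2 P Q hPQ i hi j hj, hf]
    · intro x hx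
      rw [← SetLike.mem_coe, hWeq] at hx ⊢
      have hcol : ∀ d : Fin k, M.mulVec (fun j => x j d) ∈ tp.polydiag := by
        intro d
        apply hM
        refine ⟨?_, ?_⟩
        · intro P hP i hi j hj
          show x i d = x j d
          rw [hx.1 P hP i hi j hj]
        · intro P Q hPQ i hi j hj
          show x i d = - (x j d)
          have := congrFun (hx.2 P Q hPQ i hi j hj) d
          simpa using this
      have hv : ∀ (i : Fin n) (d : Fin k),
          (∑ j, M i j • x j) d = M.mulVec (fun j => x j d) i := by
        intro i d
        simp [Finset.sum_apply, Matrix.mulVec, dotProduct]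
      refine ⟨?_, ?_⟩
      · intro P hP i hi j hj
        show H.mulVec (∑ j', M i j' • x j') = H.mulVec (∑ j', M j j' • x j')
        have hsum : (∑ j', M i j' • x j') = (∑ j', M j j' • x j') := by
          funext d
          rw [hv i d, hv j d]
          exact (hcol d).1 P hP i hi j hj
        rw [hsum]
      · intro P Q hPQ i hi j hj
        show H.mulVec (∑ j', M i j' • x j') = - H.mulVec (∑ j', M j j' • x j')
        have hsum : (∑ j', M i j' • x j') = - (∑ j', M j j' • x j') := by
          funext d
          rw [Pi.neg_apply, hv i d, hv j d]
          exact (hcol d).2 P Q hPQ i hi j hj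
        rw [hsum, Matrix.mulVec_neg]
end

section
/- Let H ∈ ℝ^{k×k} be nonzero, M ∈ ℝ^{n×n}, and let W be a linear subspace of (ℝ^k)^n. Then the following are equivalent: (i) for every function f : ℝ^k → ℝ^k the map (x_1,…,x_n) ↦ (f(x_1),…,f(x_n)) sends W into W, and the linear map x ↦ (H ∑_{j} M_{1j} x_j, …, H ∑_{j} M_{nj} x_j) sends W into W; (ii) there is a tagged partition 𝒫 of {1,…,n} whose partial involution is the empty function (i.e., Δ_𝒫 is a synchrony subspace) such that Δ_𝒫 is M-invariant and W = ℝ^k ⊗ Δ_𝒫. -/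

private lemma singleSol {k : ℕ} (a b : Fin k → ℝ) (hab : a ≠ 0 ∨ b ≠ 0) :
    {c : ℝ | a + c • b = 0}.Subsingleton := by
  intro c1 hc1 c2 hc2
  simp only [Set.mem_setOf_eq] at hc1 hc2
  by_cases hb : b = 0
  · exfalso
    rcases hab with ha | hb'
    · exact ha (by simpa [hb] using hc1)
    · exact hb' hb
  · have h0 : (c1 - c2) • b = 0 := by
      have h2 : (a + c1 • b) - (a + c2 • b) = 0 := by rw [hc1, hc2]; simp
      rw [sub_smul]
      linear_combination (norm := module) h2
    rcases smul_eq_zero.mp h0 with h | h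
    · linarith [sub_eq_zero.mp h]
    · exact absurd h hb

private lemma exists_sep {k n : ℕ} (W : Submodule ℝ (Fin n → Fin k → ℝ))
    (s : Finset (Fin n × Fin n))
    (h : ∀ p ∈ s, ∃ w ∈ W, w p.1 ≠ w p.2) :
    ∃ z ∈ W, ∀ p ∈ s, z p.1 ≠ z p.2 := by
  classical
  induction s using Finset.induction with
  | empty => exact ⟨0, W.zero_mem, by simp⟩
  | @insert p s hp ih =>
    obtain ⟨z, hzW, hz⟩ := ih (fun q hq => h q (Finset.mem_insert_of_mem hq))
    obtain ⟨w, hwW, hw⟩ := h p (Finset.mem_insert_self p s)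
    set bad : Set ℝ := ⋃ q ∈ insert p s, {c : ℝ | (z q.1 - z q.2) + c • (w q.1 - w q.2) = 0}
    have hbad : bad.Finite := by
      apply Set.Finite.biUnion (Finset.finite_toSet _)
      intro q hq
      apply Set.Subsingleton.finite
      apply singleSol
      rcases Finset.mem_insert.mp hq with rfl | hq'
      · right; exact sub_ne_zero.mpr hw
      · left; exact sub_ne_zero.mpr (hz q hq')
    obtain ⟨c, hc⟩ : ∃ c : ℝ, c ∉ bad := by
      have := hbad.infinite_compl (s := bad)
      exact this.nonempty
    refine ⟨z + c • w, W.add_mem hzW (W.smul_mem c hwW), ?_⟩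
    intro q hq heq
    apply hc
    refine Set.mem_biUnion (by exact_mod_cast hq) ?_
    simp only [Set.mem_setOf_eq]
    have : (z q.1 + c • w q.1) - (z q.2 + c • w q.2) = 0 := by
      rw [show (z + c • w) q.1 = z q.1 + c • w q.1 from rfl] at heq
      rw [show (z + c • w) q.2 = z q.2 + c • w q.2 from rfl] at heq
      rw [heq]; simp
    linear_combination (norm := module) this

/-- Proposition 4.4(3). For nonzero `H`, a subspace
`W ⊆ (ℝᵏ)ⁿ` is invariant under all diagonal maps built from arbitrary `f` and under
the linear coupling map iff `W = ℝᵏ ⊗ Δ_tp` for some `M`-invariant synchrony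
subspace `Δ_tp`. -/
theorem invariant_all_f_iff_synchrony {k n : ℕ}
    (H : Matrix (Fin k) (Fin k) ℝ) (hH : H ≠ 0) (M : Matrix (Fin n) (Fin n) ℝ)
    (W : Submodule ℝ (Fin n → Fin k → ℝ)) :
    ((∀ f : (Fin k → ℝ) → Fin k → ℝ, ∀ x ∈ W, (fun i => f (x i)) ∈ W) ∧
      (∀ x ∈ W, (fun i => H.mulVec (∑ j, M i j • x j)) ∈ W)) ↔
    (∃ tp : TaggedPartition n, tp.IsSynchrony ∧
      (∀ x ∈ tp.polydiag, M.mulVec x ∈ tp.polydiag) ∧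
      (W : Set (Fin n → Fin k → ℝ)) = tp.polydiagV k) := by
  classical
  obtain ⟨a, b, hab⟩ : ∃ a b, H a b ≠ 0 := by
    by_contra hcon
    push_neg at hcon
    exact hH (by ext a b; simpa using hcon a b)
  constructor
  · rintro ⟨hf, hc⟩
    set r : Fin n → Fin n → Prop := fun i j => ∀ x ∈ W, x i = x j with hr
    have rrefl : ∀ i, r i i := fun i x _ => rfl
    have rsymm : ∀ {i j}, r i j → r j i := fun h x hx => (h x hx).symm
    have rtrans : ∀ {i j m}, r i j → r j m → r i m := fun h1 h2 x hx => (h1 x hx).trans (h2 x hx)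
    have hWchar : ∀ x : Fin n → Fin k → ℝ, (∀ i j, r i j → x i = x j) → x ∈ W := by
      intro x hx
      set s : Finset (Fin n × Fin n) := Finset.univ.filter (fun p => ¬ r p.1 p.2) with hs
      have hsep : ∀ p ∈ s, ∃ w ∈ W, w p.1 ≠ w p.2 := by
        intro p hp
        have h2 : ¬ r p.1 p.2 := (Finset.mem_filter.mp hp).2
        rw [hr] at h2
        obtain ⟨w, hw⟩ := not_forall.mp h2
        obtain ⟨hwW, hne⟩ := Classical.not_imp.mp hw
        exact ⟨w, hwW, hne⟩
      obtain ⟨z, hzW, hz⟩ := exists_sep W s hsep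
      have hzr : ∀ i j, z i = z j → r i j := by
        intro i j hij
        by_contra hnr
        exact hz (i, j) (Finset.mem_filter.mpr ⟨Finset.mem_univ _, hnr⟩) hij
      set f : (Fin k → ℝ) → (Fin k → ℝ) :=
        fun u => if h : ∃ i, z i = u then x (Classical.choose h) else 0 with hf2
      have heq : (fun i => f (z i)) = x := by
        funext i
        have hex : ∃ i', z i' = z i := ⟨i, rfl⟩
        simp only [hf2, dif_pos hex]
        exact hx _ i (hzr _ i (Classical.choose_spec hex))
      rw [← heq]; exact hf f z hzW
    refine ⟨⟨{P | ∃ i, P = {j | r i j}}, ?_, ?_, ?_, fun _ => none, ?_, ?_, ?_, ?_⟩,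
      fun _ => rfl, ?_, ?_⟩
    · rintro P ⟨i, rfl⟩; exact ⟨i, rrefl i⟩
    · intro i; exact ⟨{j | r i j}, ⟨i, rfl⟩, rrefl i⟩
    · rintro P ⟨i, rfl⟩ Q ⟨i', rfl⟩ ⟨j, hj1, hj2⟩
      have hii' : r i i' := rtrans hj1 (rsymm hj2)
      ext m
      exact ⟨fun hm => rtrans (rsymm hii') hm, fun hm => rtrans hii' hm⟩
    · intro P h; exact absurd rfl h
    · intro P Q h; exact absurd h.symm (Option.some_ne_none _)
    · intro P Q h; exact absurd h.symm (Option.some_ne_none _)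
    · intro P Q h; exact absurd h.symm (Option.some_ne_none _)
    · -- M-invariance of the scalar polydiagonal
      intro v hv
      refine ⟨?_, fun P Q h => absurd h.symm (Option.some_ne_none _)⟩
      rintro P ⟨i0, rfl⟩ i hi i' hi'
      have hrii' : r i i' := rtrans (rsymm hi) hi'
      set x : Fin n → Fin k → ℝ := fun j c => if c = b then v j else 0 with hx
      have hxW : x ∈ W := by
        apply hWchar
        intro i1 j1 h1
        have hv1 : v i1 = v j1 := hv.1 {m | r i1 m} ⟨i1, rfl⟩ i1 (rrefl i1) j1 h1
        funext c
        by_cases hcb : c = b <;> simp [hx, hcb, hv1]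
      have hyW := hc x hxW
      have hval : ∀ i, H.mulVec (∑ j, M i j • x j) a = H a b * M.mulVec v i := by
        intro i
        have h1 : ∀ c, (∑ j, M i j • x j) c = if c = b then M.mulVec v i else 0 := by
          intro c
          simp only [Finset.sum_apply, Pi.smul_apply, smul_eq_mul, hx]
          by_cases hcb : c = b
          · simp [hcb, Matrix.mulVec, dotProduct]
          · simp [hcb]
        simp only [Matrix.mulVec, dotProduct]
        rw [Finset.sum_congr rfl (fun c _ => by rw [h1 c])]
        simp [mul_ite, Finset.sum_ite_eq', Matrix.mulVec, dotProduct]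
      have hyy := congrFun (hrii' _ hyW) a
      beta_reduce at hyy
      rw [hval i, hval i'] at hyy
      exact mul_left_cancel₀ hab hyy
    · -- W = polydiagV
      ext x
      constructor
      · intro hx
        refine ⟨?_, fun P Q h => absurd h.symm (Option.some_ne_none _)⟩
        rintro P ⟨i0, rfl⟩ i hi j hj
        exact rtrans (rsymm hi) hj x hx
      · rintro ⟨h1, _⟩
        apply hWchar
        intro i j hij
        exact h1 {m | r i m} ⟨i, rfl⟩ i (rrefl i) j hij
  · rintro ⟨tp, hsync, hMinv, hWeq⟩
    have hmem : ∀ x, x ∈ W ↔ x ∈ tp.polydiagV k := fun x => by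
      constructor
      · intro hx; rw [← hWeq]; exact hx
      · intro hx; have : x ∈ (W : Set _) := hWeq ▸ hx; exact this
    constructor
    · intro f x hx
      obtain ⟨h1, _⟩ := (hmem x).mp hx
      refine (hmem _).mpr ⟨?_, ?_⟩
      · intro P hP i hi j hj
        simp only []
        rw [h1 P hP i hi j hj]
      · intro P Q hPQ; rw [hsync P] at hPQ; exact absurd hPQ.symm (Option.some_ne_none _)
    · intro x hx
      obtain ⟨h1, _⟩ := (hmem x).mp hx
      refine (hmem _).mpr ⟨?_, ?_⟩
      · intro P hP i hi i' hi'
        have key : (∑ j, M i j • x j) = (∑ j, M i' j • x j) := by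
          funext c
          set v : Fin n → ℝ := fun j => x j c with hv
          have hvp : v ∈ tp.polydiag := by
            refine ⟨fun P hP i1 hi1 j1 hj1 => ?_, fun P Q hPQ => ?_⟩
            · exact congrFun (h1 P hP i1 hi1 j1 hj1) c
            · rw [hsync P] at hPQ; exact absurd hPQ.symm (Option.some_ne_none _)
          have hMv := (hMinv v hvp).1 P hP i hi i' hi'
          simp only [Finset.sum_apply, Pi.smul_apply, smul_eq_mul]
          simpa [Matrix.mulVec, dotProduct, hv] using hMv
        simp only [key]
      · intro P Q hPQ; rw [hsync P] at hPQ; exact absurd hPQ.symm (Option.some_ne_none _)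
end

section
/- Let M ∈ ℝ^{n×n} and let λ ∈ ℝ be an eigenvalue of M whose eigenspace {x ∈ ℝ^n : Mx = λx} is one-dimensional (geometric multiplicity 1). Let v_L be an eigenvector of Mᵀ with eigenvalue λ and let v_R be an eigenvector of M with eigenvalue λ. If W ⊆ ℝ^n is an M-invariant subspace, then v_R ∈ W or v_L ∈ W^⊥ (i.e., v_L · w = 0 for all w ∈ W). -/
open Matrix


/-- Lemma 5.1, the Main Lemma. Let `μ` be a real eigenvalue of `M`
with geometric multiplicity 1, and let `vL`, `vR` be eigenvectors of `Mᵀ` and `M`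
(respectively) with eigenvalue `μ`. If `W` is an `M`-invariant subspace, then
`vR ∈ W` or `vL ∈ W^⊥`. -/
theorem mainLemma {n : ℕ} (M : Matrix (Fin n) (Fin n) ℝ) (μ : ℝ)
    (hgeom : Module.finrank ℝ
      (LinearMap.ker (M.mulVecLin - μ • (LinearMap.id : (Fin n → ℝ) →ₗ[ℝ] (Fin n → ℝ)))) = 1)
    (vL vR : Fin n → ℝ)
    (hvL0 : vL ≠ 0) (hvL : M.transpose.mulVec vL = μ • vL)
    (hvR0 : vR ≠ 0) (hvR : M.mulVec vR = μ • vR)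
    (W : Submodule ℝ (Fin n → ℝ)) (hW : ∀ x ∈ W, M.mulVec x ∈ W) :
    vR ∈ W ∨ ∀ w ∈ W, ∑ i, vL i * w i = 0 := by
  by_cases h : ∀ w ∈ W, ∑ i, vL i * w i = 0
  · exact Or.inr h
  left
  push_neg at h
  obtain ⟨w, hwW, hw⟩ := h
  -- the linear functional x ↦ vL ⬝ᵥ x
  have hf : ∀ x : Fin n → ℝ, vL ⬝ᵥ M.mulVec x = μ * (vL ⬝ᵥ x) := by
    intro x
    rw [Matrix.dotProduct_mulVec, ← Matrix.mulVec_transpose, hvL, smul_dotProduct, smul_eq_mul]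
  -- restrict M to W
  let T : W →ₗ[ℝ] W := (M.mulVecLin).restrict hW
  let T' : W →ₗ[ℝ] W := T - μ • LinearMap.id
  have hT'not : ¬ Function.Injective T' := by
    intro hinj
    have hsurj := (LinearMap.injective_iff_surjective).mp hinj
    obtain ⟨u, hu⟩ := hsurj ⟨w, hwW⟩
    have : vL ⬝ᵥ w = vL ⬝ᵥ (M.mulVec (u : Fin n → ℝ)) - μ * (vL ⬝ᵥ (u : Fin n → ℝ)) := by
      have := congrArg (fun z : W => vL ⬝ᵥ (z : Fin n → ℝ)) hu
      simp only [T', T, LinearMap.sub_apply, LinearMap.smul_apply, LinearMap.id_apply] at this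
      have key : (((M.mulVecLin.restrict hW) u : W) : Fin n → ℝ) = M.mulVec (u : Fin n → ℝ) := rfl
      simpa [key, dotProduct_sub, dotProduct_smul, LinearMap.restrict_coe_apply, Matrix.mulVecLin_apply,
        sub_eq_iff_eq_add, smul_eq_mul] using this.symm
    rw [hf] at this
    simp at this
    exact hw this
  -- get an eigenvector of M inside W
  have : ∃ u : W, u ≠ 0 ∧ T' u = 0 := by
    by_contra hcon
    push_neg at hcon
    apply hT'not
    have : LinearMap.ker T' = ⊥ := by
      ext u
      simp only [LinearMap.mem_ker, Submodule.mem_bot]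
      constructor
      · intro hu
        by_contra hu0
        exact (hcon u hu0) hu
      · intro hu; simp [hu]
    exact LinearMap.ker_eq_bot.mp this
  obtain ⟨u, hu0, hu⟩ := this
  have huW : (u : Fin n → ℝ) ∈ W := u.2
  have huv0 : (u : Fin n → ℝ) ≠ 0 := fun hc => hu0 (Subtype.ext hc)
  have huE : M.mulVec (u : Fin n → ℝ) = μ • (u : Fin n → ℝ) := by
    have := congrArg (fun z : W => (z : Fin n → ℝ)) hu
    simp only [T', T, LinearMap.sub_apply, LinearMap.smul_apply, LinearMap.id_apply] at this
    have h2 : M.mulVec (u : Fin n → ℝ) - μ • (u : Fin n → ℝ) = 0 := by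
      have key : (((M.mulVecLin.restrict hW) u : W) : Fin n → ℝ) = M.mulVec (u : Fin n → ℝ) := rfl
      simpa [key, LinearMap.restrict_coe_apply, Matrix.mulVecLin_apply] using this
    exact sub_eq_zero.mp h2
  -- the eigenspace
  set E := LinearMap.ker (M.mulVecLin - μ • (LinearMap.id : (Fin n → ℝ) →ₗ[ℝ] (Fin n → ℝ)))
  have memE : ∀ x : Fin n → ℝ, x ∈ E ↔ M.mulVec x = μ • x := by
    intro x
    simp [E, LinearMap.mem_ker, sub_eq_zero]
  have huE' : (u : Fin n → ℝ) ∈ E := (memE _).mpr huE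
  have hvRE : vR ∈ E := (memE _).mpr hvR
  have hu0E : (⟨(u : Fin n → ℝ), huE'⟩ : E) ≠ 0 := by
    intro hc
    exact huv0 (congrArg Subtype.val hc)
  obtain ⟨c, hc⟩ := (finrank_eq_one_iff_of_nonzero' (⟨(u : Fin n → ℝ), huE'⟩ : E) hu0E).mp
    hgeom ⟨vR, hvRE⟩
  have : c • (u : Fin n → ℝ) = vR := congrArg Subtype.val hc
  rw [← this]
  exact W.smul_mem c huW
end

section
/- Let n ≥ 1, let A ∈ ℝ^{n×n}, and let λ ∈ ℝ be an eigenvalue of A whose eigenspace is one-dimensional (geometric multiplicity 1). Suppose v_R is an eigenvector of A with eigenvalue λ having all entries strictly positive, and v_L is an eigenvector of Aᵀ with eigenvalue λ having all entries strictly positive. Then every A-invariant synchrony subspace Δ_𝒫 ⊆ ℝ^n contains v_R, and every A-invariant anti-synchrony subspace Δ_𝒫 ⊆ ℝ^n is orthogonal to v_L (i.e., v_L · x = 0 for all x ∈ Δ_𝒫). -/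
open Matrix


/-- The polydiagonal as a submodule. -/
def polydiagSubmodule {n : ℕ} (tpc : Set (Set (Fin n)))
    (tps : Set (Fin n) → Option (Set (Fin n))) : Submodule ℝ (Fin n → ℝ) where
  carrier := {x | (∀ P ∈ tpc, ∀ i ∈ P, ∀ j ∈ P, x i = x j) ∧
       (∀ P Q, tps P = some Q → ∀ i ∈ P, ∀ j ∈ Q, x i = - x j)}
  zero_mem' := ⟨fun _ _ _ _ _ _ => rfl, fun _ _ _ _ _ _ _ => by simp⟩
  add_mem' := fun ha hb =>
    ⟨fun P hP i hi j hj => by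
        simp only [Pi.add_apply, ha.1 P hP i hi j hj, hb.1 P hP i hi j hj],
     fun P Q h i hi j hj => by
        simp only [Pi.add_apply, ha.2 P Q h i hi j hj, hb.2 P Q h i hi j hj]; ring⟩
  smul_mem' := fun c x hx =>
    ⟨fun P hP i hi j hj => by simp only [Pi.smul_apply, hx.1 P hP i hi j hj],
     fun P Q h i hi j hj => by
        simp only [Pi.smul_apply, hx.2 P Q h i hi j hj, smul_eq_mul]; ring⟩

lemma key_aux {n : ℕ} (A : Matrix (Fin n) (Fin n) ℝ) (μ : ℝ)
    (hgeom : Module.finrank ℝ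
      (LinearMap.ker (A.mulVecLin - μ • (LinearMap.id : (Fin n → ℝ) →ₗ[ℝ] (Fin n → ℝ)))) = 1)
    (vR vL : Fin n → ℝ) (hvRne : vR ≠ 0) (hvR : A.mulVec vR = μ • vR)
    (hvL : A.transpose.mulVec vL = μ • vL)
    (W : Submodule ℝ (Fin n → ℝ)) (hW : ∀ w ∈ W, A.mulVec w ∈ W)
    (x : Fin n → ℝ) (hx : x ∈ W) (hxL : vL ⬝ᵥ x ≠ 0) : vR ∈ W := by
  set L := A.mulVecLin - μ • (LinearMap.id : (Fin n → ℝ) →ₗ[ℝ] (Fin n → ℝ)) with hLdef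
  have hLapp : ∀ y, L y = A.mulVec y - μ • y := fun y => rfl
  have hLW : ∀ w ∈ W, L w ∈ W := fun w hw => by
    rw [hLapp]; exact W.sub_mem (hW w hw) (W.smul_mem μ hw)
  have hdot : ∀ y, vL ⬝ᵥ L y = 0 := by
    intro y
    have h1 : vL ⬝ᵥ A.mulVec y = μ * (vL ⬝ᵥ y) := by
      rw [Matrix.dotProduct_mulVec, ← Matrix.mulVec_transpose, hvL]
      simp [smul_dotProduct]
    rw [hLapp]
    simp [dotProduct_sub, h1, dotProduct_smul, smul_eq_mul]
  -- the restriction of L to W is not injective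
  have hf : ¬ Function.Injective (L.restrict hLW) := by
    intro hinj
    have hsurj : Function.Surjective (L.restrict hLW) :=
      (LinearMap.injective_iff_surjective).1 hinj
    obtain ⟨w, hw⟩ := hsurj ⟨x, hx⟩
    have : vL ⬝ᵥ x = 0 := by
      have := congrArg Subtype.val hw
      rw [LinearMap.restrict_apply] at this
      rw [show x = L (w : Fin n → ℝ) from this.symm]
      exact hdot w
    exact hxL this
  -- so there is a nonzero kernel element
  have : ∃ w : W, w ≠ 0 ∧ L.restrict hLW w = 0 := by
    by_contra hcon
    push_neg at hcon
    apply hf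
    rw [← LinearMap.ker_eq_bot, Submodule.eq_bot_iff]
    intro w hw
    by_contra hw0
    exact hcon w hw0 hw
  obtain ⟨w, hw0, hwker⟩ := this
  have hwL : L (w : Fin n → ℝ) = 0 := by
    have := congrArg Subtype.val hwker
    rwa [LinearMap.restrict_apply] at this
  -- ker L = span {vR}
  have hvRker : vR ∈ LinearMap.ker L := by
    rw [LinearMap.mem_ker, hLapp, hvR, sub_self]
  have hspan : Submodule.span ℝ {vR} = LinearMap.ker L := by
    apply Submodule.eq_of_le_of_finrank_le
    · rw [Submodule.span_le, Set.singleton_subset_iff]; exact hvRker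
    · rw [hgeom, finrank_span_singleton hvRne]
  have hwk : (w : Fin n → ℝ) ∈ Submodule.span ℝ {vR} := by
    rw [hspan, LinearMap.mem_ker]; exact hwL
  obtain ⟨c, hc⟩ := Submodule.mem_span_singleton.1 hwk
  have hcne : c ≠ 0 := by
    rintro rfl
    apply hw0
    apply Subtype.ext
    simpa using hc.symm
  have : vR = c⁻¹ • (w : Fin n → ℝ) := by
    rw [← hc, smul_smul, inv_mul_cancel₀ hcne, one_smul]
  rw [this]
  exact W.smul_mem _ w.2

/-- Remark 5.5, Frobenius–Perron consequence. Suppose `μ` is an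
eigenvalue of `A` with geometric multiplicity 1, with strictly positive right and left
eigenvectors `vR` (of `A`) and `vL` (of `Aᵀ`). Then every `A`-invariant synchrony
subspace contains `vR`, and every `A`-invariant anti-synchrony subspace is orthogonal
to `vL`. -/
theorem perron_synchrony_antisynchrony {n : ℕ} (hn : 1 ≤ n)
    (A : Matrix (Fin n) (Fin n) ℝ) (μ : ℝ)
    (hgeom : Module.finrank ℝ
      (LinearMap.ker (A.mulVecLin - μ • (LinearMap.id : (Fin n → ℝ) →ₗ[ℝ] (Fin n → ℝ)))) = 1)
    (vR vL : Fin n → ℝ)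
    (hvRpos : ∀ i, 0 < vR i) (hvR : A.mulVec vR = μ • vR)
    (hvLpos : ∀ i, 0 < vL i) (hvL : A.transpose.mulVec vL = μ • vL)
    (tp : TaggedPartition n) (hinv : ∀ x ∈ tp.polydiag, A.mulVec x ∈ tp.polydiag) :
    (tp.IsSynchrony → vR ∈ tp.polydiag) ∧
    (¬ tp.IsSynchrony → ∀ x ∈ tp.polydiag, ∑ i, vL i * x i = 0) := by
  have hcar : ∀ y : Fin n → ℝ, y ∈ polydiagSubmodule tp.classes tp.star ↔ y ∈ tp.polydiag :=
    fun _ => Iff.rfl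
  have hvRne : vR ≠ 0 := by
    intro h
    have := hvRpos ⟨0, hn⟩
    rw [h] at this
    exact lt_irrefl _ this
  set W := polydiagSubmodule tp.classes tp.star with hWdef
  have hinv' : ∀ w ∈ W, A.mulVec w ∈ W := fun w hw => (hcar _).2 (hinv w ((hcar _).1 hw))
  constructor
  · intro hsync
    have h1 : (fun _ => (1:ℝ)) ∈ W := by
      refine ⟨fun _ _ _ _ _ _ => rfl, fun P Q h _ _ _ _ => ?_⟩
      rw [hsync P] at h; exact absurd h (by simp)
    have hd1 : vL ⬝ᵥ (fun _ => (1:ℝ)) ≠ 0 := by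
      have : (0:ℝ) < ∑ i, vL i * 1 := by
        apply Finset.sum_pos (fun i _ => by simpa using hvLpos i)
        exact ⟨⟨0, hn⟩, Finset.mem_univ _⟩
      exact ne_of_gt this
    exact (hcar vR).1 (key_aux A μ hgeom vR vL hvRne hvR hvL W hinv' _ h1 hd1)
  · intro hns x hx
    by_contra hne
    have hdx : vL ⬝ᵥ x ≠ 0 := hne
    have hvRW : vR ∈ W := key_aux A μ hgeom vR vL hvRne hvR hvL W hinv' x ((hcar x).2 hx) hdx
    rw [TaggedPartition.IsSynchrony] at hns
    push_neg at hns
    obtain ⟨P, hP⟩ := hns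
    obtain ⟨Q, hPQ⟩ := Option.ne_none_iff_exists'.1 hP
    obtain ⟨i, hi⟩ := tp.classes_nonempty P (tp.star_dom P hP)
    obtain ⟨j, hj⟩ := tp.classes_nonempty Q (tp.star_ran P Q hPQ)
    have := hvRW.2 P Q hPQ i hi j hj
    linarith [hvRpos i, hvRpos j]
end

section
/- Let M ∈ ℝ^{n×n} have all column sums equal to λ ∈ ℝ (so ∑_{i} M_{ij} = λ for every j, and 𝟙 = (1,…,1) is an eigenvector of Mᵀ with eigenvalue λ). Assume the eigenspace of M for the eigenvalue λ is one-dimensional, and let v be an eigenvector of M with eigenvalue λ. Then every M-invariant subspace W ⊆ ℝ^n satisfies v ∈ W or 𝟙 ∈ W^⊥. -/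
/-- Corollary 6.1. Let `M` have all column sums equal to `μ`
(so the all-ones vector is an eigenvector of `Mᵀ` with eigenvalue `μ`). If the
eigenspace of `M` for `μ` is one-dimensional and `v` is an eigenvector of `M` with
eigenvalue `μ`, then every `M`-invariant subspace `W` satisfies `v ∈ W` or `𝟙 ∈ W^⊥`. -/
theorem corOfMain {n : ℕ} (M : Matrix (Fin n) (Fin n) ℝ) (μ : ℝ)
    (hcol : ∀ j, ∑ i, M i j = μ)
    (hgeom : Module.finrank ℝ
      (LinearMap.ker (M.mulVecLin - μ • (LinearMap.id : (Fin n → ℝ) →ₗ[ℝ] (Fin n → ℝ)))) = 1)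
    (v : Fin n → ℝ) (hv0 : v ≠ 0) (hv : M.mulVec v = μ • v)
    (W : Submodule ℝ (Fin n → ℝ)) (hW : ∀ x ∈ W, M.mulVec x ∈ W) :
    v ∈ W ∨ ∀ w ∈ W, ∑ i, w i = 0 := by
  by_cases hsum : ∀ w ∈ W, ∑ i, w i = 0
  · exact Or.inr hsum
  left
  push_neg at hsum
  obtain ⟨w, hwW, hwne⟩ := hsum
  set L : (Fin n → ℝ) →ₗ[ℝ] (Fin n → ℝ) :=
    M.mulVecLin - μ • (LinearMap.id : (Fin n → ℝ) →ₗ[ℝ] (Fin n → ℝ)) with hLdef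
  have hLapp : ∀ x, L x = M.mulVec x - μ • x := by
    intro x; simp [hLdef]
  -- sum of coordinates of L x is zero
  have hfL : ∀ x, ∑ i, (L x) i = 0 := by
    intro x
    rw [hLapp]
    have h1 : ∑ i, (M.mulVec x) i = μ * ∑ j, x j := by
      simp only [Matrix.mulVec, dotProduct]
      rw [Finset.sum_comm, Finset.mul_sum]
      refine Finset.sum_congr rfl fun j _ => ?_
      rw [← Finset.sum_mul, hcol]
    simp [Pi.sub_apply, Finset.sum_sub_distrib, h1, Finset.mul_sum]
  have hLW : ∀ x ∈ W, L x ∈ W := by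
    intro x hx
    rw [hLapp]
    exact W.sub_mem (hW x hx) (W.smul_mem μ hx)
  -- restrict L to W
  let L' : W →ₗ[ℝ] W := L.restrict hLW
  -- L' is not injective
  have hni : ¬ Function.Injective L' := by
    intro hinj
    have hsurj : Function.Surjective L' :=
      (LinearMap.injective_iff_surjective).mp hinj
    obtain ⟨x, hx⟩ := hsurj ⟨w, hwW⟩
    have hx1 : L (x : Fin n → ℝ) = w := congrArg Subtype.val hx
    have := hfL (x : Fin n → ℝ)
    rw [hx1] at this
    exact hwne this
  rw [← LinearMap.ker_eq_bot] at hni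
  obtain ⟨u, hu_mem, hu_ne⟩ := Submodule.exists_mem_ne_zero_of_ne_bot hni
  have huL : L (u : Fin n → ℝ) = 0 := congrArg Subtype.val hu_mem
  have huW : (u : Fin n → ℝ) ∈ W := u.2
  have hune : (u : Fin n → ℝ) ≠ 0 := fun h => hu_ne (Subtype.ext h)
  -- eigenspace = span of u
  have huK : (u : Fin n → ℝ) ∈ LinearMap.ker L := huL
  have hspan_le : (ℝ ∙ (u : Fin n → ℝ)) ≤ LinearMap.ker L :=
    (Submodule.span_singleton_le_iff_mem _ _).mpr huK
  have hspan_rank : Module.finrank ℝ (ℝ ∙ (u : Fin n → ℝ)) = 1 :=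
    finrank_span_singleton hune
  have heq : (ℝ ∙ (u : Fin n → ℝ)) = LinearMap.ker L := by
    apply Submodule.eq_of_le_of_finrank_le hspan_le
    rw [hspan_rank, hgeom]
  have hvK : v ∈ LinearMap.ker L := by
    rw [LinearMap.mem_ker, hLapp, hv, sub_self]
  rw [← heq, Submodule.mem_span_singleton] at hvK
  obtain ⟨c, hc⟩ := hvK
  rw [← hc]
  exact W.smul_mem c huW
end

section
/- Let n ≥ 1 and let M ∈ ℝ^{n×n} have all column sums equal to λ ∈ ℝ. Assume the eigenspace of M for the eigenvalue λ is one-dimensional, and let v be an eigenvector of M with eigenvalue λ satisfying v_i + v_j ≠ 0 for all i and j (including i = j). Then every M-invariant polydiagonal subspace Δ_𝒫 ⊆ ℝ^n is either a synchrony subspace that contains v, or an evenly tagged anti-synchrony subspace that does not contain v. -/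
/-- polydiag as a submodule -/
def polySub {n : ℕ} (tp : TaggedPartition n) : Submodule ℝ (Fin n → ℝ) where
  carrier := tp.polydiag
  zero_mem' := ⟨fun _ _ _ _ _ _ => rfl, fun _ _ _ _ _ _ _ => by simp⟩
  add_mem' := by
    rintro x y ⟨hx1, hx2⟩ ⟨hy1, hy2⟩
    refine ⟨fun P hP i hi j hj => ?_, fun P Q h i hi j hj => ?_⟩
    · simp only [Pi.add_apply, hx1 P hP i hi j hj, hy1 P hP i hi j hj]
    · simp only [Pi.add_apply, hx2 P Q h i hi j hj, hy2 P Q h i hi j hj]; ring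
  smul_mem' := by
    rintro c x ⟨hx1, hx2⟩
    refine ⟨fun P hP i hi j hj => ?_, fun P Q h i hi j hj => ?_⟩
    · simp only [Pi.smul_apply, hx1 P hP i hi j hj]
    · simp only [Pi.smul_apply, hx2 P Q h i hi j hj, smul_neg]

lemma sum_mulVec {n : ℕ} (M : Matrix (Fin n) (Fin n) ℝ) (μ : ℝ)
    (hcol : ∀ j, ∑ i, M i j = μ) (x : Fin n → ℝ) :
    ∑ i, M.mulVec x i = μ * ∑ i, x i := by
  simp only [Matrix.mulVec, dotProduct]
  rw [Finset.sum_comm, Finset.mul_sum]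
  refine Finset.sum_congr rfl fun j _ => ?_
  rw [← Finset.sum_mul, hcol]

lemma mem_of_sum_ne {n : ℕ} (M : Matrix (Fin n) (Fin n) ℝ) (μ : ℝ)
    (hcol : ∀ j, ∑ i, M i j = μ)
    (hgeom : Module.finrank ℝ
      (LinearMap.ker (M.mulVecLin - μ • (LinearMap.id : (Fin n → ℝ) →ₗ[ℝ] (Fin n → ℝ)))) = 1)
    (v : Fin n → ℝ) (hv0 : v ≠ 0) (hv : M.mulVec v = μ • v)
    (tp : TaggedPartition n) (hinv : ∀ x ∈ tp.polydiag, M.mulVec x ∈ tp.polydiag)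
    (x0 : Fin n → ℝ) (hx0 : x0 ∈ tp.polydiag) (hs : ∑ i, x0 i ≠ 0) :
    v ∈ tp.polydiag := by
  set f : (Fin n → ℝ) →ₗ[ℝ] (Fin n → ℝ) :=
    M.mulVecLin - μ • (LinearMap.id : (Fin n → ℝ) →ₗ[ℝ] (Fin n → ℝ)) with hf_def
  have hfapp : ∀ x, f x = M.mulVec x - μ • x := fun x => rfl
  have hfmem : ∀ x ∈ polySub tp, f x ∈ polySub tp := by
    intro x hx
    rw [hfapp]
    exact sub_mem (hinv x hx) (Submodule.smul_mem _ _ hx)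
  set T : polySub tp →ₗ[ℝ] polySub tp := f.restrict hfmem with hT_def
  have hsumf : ∀ x : Fin n → ℝ, ∑ i, f x i = μ * ∑ i, x i - μ * ∑ i, x i := by
    intro x
    rw [hfapp]
    simp only [Pi.sub_apply, Pi.smul_apply, smul_eq_mul, Finset.sum_sub_distrib,
      sum_mulVec M μ hcol, Finset.mul_sum]
  have hnotsurj : ¬ Function.Surjective T := by
    intro hsurj
    obtain ⟨y, hy⟩ := hsurj ⟨x0, hx0⟩
    have : f (y : Fin n → ℝ) = x0 := congrArg Subtype.val hy
    have h2 : ∑ i, x0 i = 0 := by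
      rw [← this, hsumf]; ring
    exact hs h2
  have hnotinj : ¬ Function.Injective T := fun h => hnotsurj ((LinearMap.injective_iff_surjective).mp h)
  rw [← LinearMap.ker_eq_bot] at hnotinj
  obtain ⟨w, hw0⟩ := Submodule.exists_mem_ne_zero_of_ne_bot hnotinj
  obtain ⟨hwker, hwne⟩ := hw0
  have hwW : (w : Fin n → ℝ) ∈ polySub tp := w.2
  have hwker' : (w : Fin n → ℝ) ∈ LinearMap.ker f := by
    have : f (w : Fin n → ℝ) = 0 := congrArg Subtype.val (LinearMap.mem_ker.mp hwker)
    exact LinearMap.mem_ker.mpr this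
  have hwne' : (w : Fin n → ℝ) ≠ 0 := by
    intro h; exact hwne (Subtype.ext h)
  have hvker : v ∈ LinearMap.ker f := by
    rw [LinearMap.mem_ker, hfapp, hv, sub_self]
  -- rank-one argument
  set K := LinearMap.ker f
  have hK : Module.finrank ℝ K = 1 := hgeom
  have := (finrank_eq_one_iff_of_nonzero' (⟨(w : Fin n → ℝ), hwker'⟩ : K)
    (by simpa using hwne')).mp hK ⟨v, hvker⟩
  obtain ⟨c, hc⟩ := this
  have hcv : c • (w : Fin n → ℝ) = v := congrArg Subtype.val hc
  rw [← hcv]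
  exact Submodule.smul_mem _ _ hwW


lemma filter_card_eq_ncard {n : ℕ} (R : Set (Fin n)) [DecidablePred (· ∈ R)] :
    (Finset.univ.filter (· ∈ R)).card = R.ncard := by
  rw [← Nat.card_coe_set_eq, Nat.card_eq_fintype_card, Fintype.card_subtype]

/-- Theorem 6.3, the main theorem. Let `M` have all column sums equal
to `μ`, with one-dimensional eigenspace for `μ`, and let `v` be an eigenvector of `M`
with eigenvalue `μ` satisfying `v i + v j ≠ 0` for all `i, j`. Then every `M`-invariant
polydiagonal subspace is a synchrony subspace containing `v` or an evenly tagged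
anti-synchrony subspace not containing `v`. -/
theorem mainTheorem {n : ℕ} (hn : 1 ≤ n) (M : Matrix (Fin n) (Fin n) ℝ) (μ : ℝ)
    (hcol : ∀ j, ∑ i, M i j = μ)
    (hgeom : Module.finrank ℝ
      (LinearMap.ker (M.mulVecLin - μ • (LinearMap.id : (Fin n → ℝ) →ₗ[ℝ] (Fin n → ℝ)))) = 1)
    (v : Fin n → ℝ) (hv0 : v ≠ 0) (hv : M.mulVec v = μ • v)
    (hvsum : ∀ i j, v i + v j ≠ 0)
    (tp : TaggedPartition n) (hinv : ∀ x ∈ tp.polydiag, M.mulVec x ∈ tp.polydiag) :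
    (tp.IsSynchrony ∧ v ∈ tp.polydiag) ∨
    (¬ tp.IsSynchrony ∧ tp.EvenlyTagged ∧ v ∉ tp.polydiag) := by
    classical
  have hdisj : ∀ P ∈ tp.classes, ∀ Q ∈ tp.classes, P ≠ Q → ∀ i ∈ P, i ∉ Q := by
    intro P hP Q hQ hne i hiP hiQ
    exact hne (tp.eq_of_inter P hP Q hQ ⟨i, hiP, hiQ⟩)
  by_cases hsync : tp.IsSynchrony
  · left
    refine ⟨hsync, ?_⟩
    have hone : (fun _ => (1:ℝ)) ∈ tp.polydiag := by
      refine ⟨fun _ _ _ _ _ _ => rfl, fun P Q h => ?_⟩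
      rw [hsync P] at h; exact absurd h (by simp)
    refine mem_of_sum_ne M μ hcol hgeom v hv0 hv tp hinv _ hone ?_
    have : (∑ _i : Fin n, (1:ℝ)) = n := by simp
    rw [this]
    exact_mod_cast Nat.one_le_iff_ne_zero.mp hn
  · right
    obtain ⟨P₀, hP₀ne⟩ := not_forall.mp hsync
    obtain ⟨Q₀, hPQ₀⟩ : ∃ Q, tp.star P₀ = some Q := Option.ne_none_iff_exists'.mp hP₀ne
    have hP₀cl := tp.star_dom P₀ hP₀ne
    have hQ₀cl := tp.star_ran P₀ Q₀ hPQ₀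
    obtain ⟨i₀, hi₀⟩ := tp.classes_nonempty P₀ hP₀cl
    obtain ⟨j₀, hj₀⟩ := tp.classes_nonempty Q₀ hQ₀cl
    have hvnot : v ∉ tp.polydiag := by
      rintro ⟨h1, h2⟩
      exact hvsum i₀ j₀ (by rw [h2 P₀ Q₀ hPQ₀ i₀ hi₀ j₀ hj₀]; ring)
    refine ⟨hsync, ?_, hvnot⟩
    by_contra heven
    rw [TaggedPartition.EvenlyTagged, not_and_or] at heven
    have hx0 : ∃ x0 ∈ tp.polydiag, (∑ i, x0 i) ≠ 0 := by
      rcases heven with hfull | hpair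
      · -- some class R with star R = none
        rw [TaggedPartition.FullyTagged] at hfull
        push_neg at hfull
        obtain ⟨R, hRcl, hR⟩ := hfull
        refine ⟨fun i => if i ∈ R then (1:ℝ) else 0, ⟨?_, ?_⟩, ?_⟩
        · intro P hP i hi j hj
          by_cases hiR : i ∈ R
          · have hPR : P = R := tp.eq_of_inter P hP R hRcl ⟨i, hi, hiR⟩
            have hjR : j ∈ R := hPR ▸ hj
            simp [hiR, hjR]
          · by_cases hjR : j ∈ R
            · have hPR : P = R := tp.eq_of_inter P hP R hRcl ⟨j, hj, hjR⟩
              exact absurd (hPR ▸ hi) hiR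
            · simp [hiR, hjR]
        · intro P Q h i hi j hj
          have hPcl := tp.star_dom P (by rw [h]; simp)
          have hQcl := tp.star_ran P Q h
          have hPR : P ≠ R := by rintro rfl; rw [hR] at h; cases h
          have hQR : Q ≠ R := by
            rintro rfl; rw [tp.star_invol P Q h] at hR; cases hR
          have hiR : i ∉ R := hdisj P hPcl R hRcl hPR i hi
          have hjR : j ∉ R := hdisj Q hQcl R hRcl hQR j hj
          simp [hiR, hjR]
        · obtain ⟨r, hr⟩ := tp.classes_nonempty R hRcl
          have hle : (1:ℝ) ≤ ∑ i, if i ∈ R then (1:ℝ) else 0 := by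
            have := Finset.single_le_sum (f := fun i => if i ∈ R then (1:ℝ) else 0)
              (fun i _ => by positivity) (Finset.mem_univ r)
            simpa [hr] using this
          linarith
      · -- a pair with unequal cardinalities
        push_neg at hpair
        obtain ⟨P, Q, hPQ, hcard⟩ := hpair
        have hPcl := tp.star_dom P (by rw [hPQ]; simp)
        have hQcl := tp.star_ran P Q hPQ
        have hPneQ : P ≠ Q := by rintro rfl; exact hcard rfl
        set x0 : Fin n → ℝ := fun i => (if i ∈ P then (1:ℝ) else 0) - (if i ∈ Q then 1 else 0)
          with hx0def
        have hval : ∀ R ∈ tp.classes, ∀ i ∈ R,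
            x0 i = (if R = P then (1:ℝ) else 0) - (if R = Q then 1 else 0) := by
          intro R hRcl i hi
          by_cases hRP : R = P
          · subst hRP
            have hiQ : i ∉ Q := hdisj R hPcl Q hQcl hPneQ i hi
            simp [hx0def, hi, hiQ, hPneQ]
          · have hiP : i ∉ P := fun h => hRP (tp.eq_of_inter R hRcl P hPcl ⟨i, hi, h⟩)
            by_cases hRQ : R = Q
            · subst hRQ
              simp [hx0def, hiP, hi, Ne.symm hPneQ]
            · have hiQ : i ∉ Q := fun h => hRQ (tp.eq_of_inter R hRcl Q hQcl ⟨i, hi, h⟩)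
              simp [hx0def, hiP, hiQ, hRP, hRQ]
        refine ⟨x0, ⟨?_, ?_⟩, ?_⟩
        · intro R hR i hi j hj
          rw [hval R hR i hi, hval R hR j hj]
        · intro P₁ Q₁ h i hi j hj
          have hP₁cl := tp.star_dom P₁ (by rw [h]; simp)
          have hQ₁cl := tp.star_ran P₁ Q₁ h
          rw [hval P₁ hP₁cl i hi, hval Q₁ hQ₁cl j hj]
          by_cases h1 : P₁ = P
          · have h2 : Q₁ = Q := by
              rw [h1, hPQ] at h; exact (Option.some_injective _ h).symm
            have h3 : Q₁ ≠ P := h2 ▸ (Ne.symm hPneQ)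
            have h4 : P₁ ≠ Q := h1 ▸ hPneQ
            simp [h1, h2, h3, h4, hPneQ, Ne.symm hPneQ]
          · by_cases h5 : P₁ = Q
            · have h6 : Q₁ = P := by
                have h' := h
                rw [h5, tp.star_invol P Q hPQ] at h'
                exact (Option.some_injective _ h').symm
              have h7 : Q₁ ≠ Q := h6 ▸ hPneQ
              simp [h1, h5, h6, h7, hPneQ, Ne.symm hPneQ]
            · have h8 : Q₁ ≠ P := by
                intro e
                have h' := tp.star_invol P₁ Q₁ h
                rw [e, hPQ] at h'
                exact h5 (Option.some_injective _ h').symm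
              have h9 : Q₁ ≠ Q := by
                intro e
                have h' := tp.star_invol P₁ Q₁ h
                rw [e, tp.star_invol P Q hPQ] at h'
                exact h1 (Option.some_injective _ h').symm
              simp [h1, h5, h8, h9]
        · have hsum : ∑ i, x0 i = (P.ncard : ℝ) - (Q.ncard : ℝ) := by
            rw [hx0def]
            rw [Finset.sum_sub_distrib]
            rw [Finset.sum_boole, Finset.sum_boole]
            rw [filter_card_eq_ncard, filter_card_eq_ncard]
          rw [hsum]
          rw [sub_ne_zero]
          exact_mod_cast hcard
    obtain ⟨x0, hx0mem, hx0sum⟩ := hx0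
    exact hvnot (mem_of_sum_ne M μ hcol hgeom v hv0 hv tp hinv x0 hx0mem hx0sum)
end

section
/- Let n ≥ 1 and let A ∈ ℝ^{n×n} have nonnegative off-diagonal entries (A_{ij} ≥ 0 for all i ≠ j). Assume A is irreducible, i.e., for all vertices i ≠ j there exist i = i_0, i_1, …, i_m = j with A_{i_{t+1} i_t} ≠ 0 and i_{t+1} ≠ i_t for each t. Let L be the Laplacian matrix of A. Then the kernel of L is exactly the span of the all-ones vector 𝟙 = (1,…,1); in particular the eigenvalue 0 of L has geometric multiplicity 1. -/
/-- The Laplacian matrix of a weighted adjacency matrix `A`: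
`L_{ij} = (∑_k A_{ik}) δ_{ij} − A_{ij}`. -/
def lap {n : ℕ} (A : Matrix (Fin n) (Fin n) ℝ) : Matrix (Fin n) (Fin n) ℝ :=
  Matrix.of fun i j => (if i = j then ∑ k, A i k else 0) - A i j

lemma lap_mulVec {n : ℕ} (A : Matrix (Fin n) (Fin n) ℝ) (x : Fin n → ℝ) (r : Fin n) :
    (lap A).mulVec x r = ∑ j, A r j * (x r - x j) := by
  simp only [Matrix.mulVec, dotProduct, lap, Matrix.of_apply, sub_mul, mul_sub,
    ite_mul, zero_mul]
  rw [Finset.sum_sub_distrib, Finset.sum_sub_distrib]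
  congr 1
  rw [Finset.sum_ite_eq Finset.univ r (fun j => (∑ k, A r k) * x j)]
  simp [Finset.sum_mul]

/-- Remark 6.8. If `A` has nonnegative off-diagonal entries and is
irreducible (in the directed-path sense), then the kernel of the Laplacian `L` of `A`
is exactly the span of the all-ones vector; in particular the eigenvalue `0` of `L`
has geometric multiplicity 1. -/
theorem ker_lap_eq_span_ones {n : ℕ} (hn : 1 ≤ n) (A : Matrix (Fin n) (Fin n) ℝ)
    (hnn : ∀ i j, i ≠ j → 0 ≤ A i j)
    (hirr : ∀ i j : Fin n, i ≠ j → ∃ m : ℕ, ∃ c : ℕ → Fin n, c 0 = i ∧ c m = j ∧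
      ∀ t < m, A (c (t + 1)) (c t) ≠ 0 ∧ c (t + 1) ≠ c t) :
    LinearMap.ker (lap A).mulVecLin = Submodule.span ℝ {fun _ => (1 : ℝ)} ∧
    Module.finrank ℝ (LinearMap.ker (lap A).mulVecLin) = 1 := by
  have hone : (lap A).mulVecLin (fun _ => (1 : ℝ)) = 0 := by
    funext r
    simp [Matrix.mulVecLin_apply, lap_mulVec]
  have hker : LinearMap.ker (lap A).mulVecLin = Submodule.span ℝ {fun _ => (1 : ℝ)} := by
    apply le_antisymm
    · intro x hx
      have hx0 : ∀ r, ∑ j, A r j * (x r - x j) = 0 := by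
        intro r
        have := congrFun (LinearMap.mem_ker.mp hx) r
        rwa [Matrix.mulVecLin_apply, lap_mulVec] at this
      -- take a maximizer i0 of x
      obtain ⟨i0, -, hmax⟩ := Finset.exists_max_image Finset.univ x
        (Finset.univ_nonempty_iff.mpr (Fin.pos_iff_nonempty.mp hn))
      set M := x i0 with hM
      -- propagate: if x r = M and A r j ≠ 0 then x j = M
      have step : ∀ r j, x r = M → A r j ≠ 0 → x j = M := by
        intro r j hr hAj
        have hterm : ∀ k ∈ Finset.univ, (0:ℝ) ≤ A r k * (x r - x k) := by
          intro k _
          by_cases hk : r = k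
          · simp [hk]
          · exact mul_nonneg (hnn r k hk) (by rw [hr]; linarith [hmax k (Finset.mem_univ k)])
        have := (Finset.sum_eq_zero_iff_of_nonneg hterm).mp (hx0 r) j (Finset.mem_univ j)
        rcases mul_eq_zero.mp this with h | h
        · exact absurd h hAj
        · rw [hr] at h; linarith
      -- all entries equal M
      have hall : ∀ j, x j = M := by
        intro j
        by_cases hj : j = i0
        · rw [hj]
        · obtain ⟨m, c, hc0, hcm, hstep⟩ := hirr j i0 hj
          have key : ∀ k, k ≤ m → x (c (m - k)) = M := by
            intro k
            induction k with
            | zero => intro _; simp [hcm, hM]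
            | succ k ih =>
              intro hk
              have hk' : k ≤ m := Nat.le_of_succ_le hk
              have heq : m - k = (m - (k + 1)) + 1 := by omega
              have hlt : m - (k + 1) < m := by omega
              have hprev : x (c ((m - (k + 1)) + 1)) = M := by rw [← heq]; exact ih hk'
              exact step _ _ hprev (hstep _ hlt).1
          have := key m le_rfl
          simpa [hc0] using this
      have hx : x = M • (fun _ => (1 : ℝ)) := by
        funext j; simpa using hall j
      rw [hx]
      exact Submodule.smul_mem _ _ (Submodule.mem_span_singleton_self _)
    · rw [Submodule.span_le, Set.singleton_subset_iff]
      exact LinearMap.mem_ker.mpr hone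
  refine ⟨hker, ?_⟩
  rw [hker]
  apply finrank_span_singleton
  intro h
  obtain ⟨i⟩ := Fin.pos_iff_nonempty.mp hn
  have := congrFun h i
  simp at this
end

section
/- For every n ≥ 0 there is a bijection between the set of tagged partitions of {1,…,n} and the set of B-type partitions of {−n,…,n}; in particular these two sets have the same cardinality. -/
/-- A B-type partition of `{−n,…,n} ⊆ ℤ`: a partition into nonempty classes such that
the negative `-Q` of every class `Q` is a class, and there is precisely one class `Q₀`
with `Q₀ = -Q₀`. -/
structure BTypePartition (n : ℕ) where
  classes : Set (Set ℤ)
  subset_Icc : ∀ Q ∈ classes, Q ⊆ Set.Icc (-(n : ℤ)) (n : ℤ)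
  classes_nonempty : ∀ Q ∈ classes, Q.Nonempty
  cover : ∀ m : ℤ, -(n : ℤ) ≤ m → m ≤ (n : ℤ) → ∃ Q ∈ classes, m ∈ Q
  eq_of_inter : ∀ P ∈ classes, ∀ Q ∈ classes, (P ∩ Q).Nonempty → P = Q
  neg_mem : ∀ Q ∈ classes, -Q ∈ classes
  existsUnique_fixed : ∃! Q, Q ∈ classes ∧ -Q = Q


namespace BT
variable {n : ℕ}


/-- Embed positives. -/
def up (S : Set (Fin n)) : Set ℤ := (fun i : Fin n => (i : ℤ) + 1) '' S

def down (T : Set ℤ) : Set (Fin n) := {i : Fin n | (i : ℤ) + 1 ∈ T}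

lemma ι_inj : Function.Injective (fun i : Fin n => (i : ℤ) + 1) := by
  intro i j h
  simp only [add_left_inj, Int.natCast_inj] at h
  exact Fin.ext h

lemma mem_up {S : Set (Fin n)} {i : Fin n} : ((i : ℤ) + 1) ∈ up S ↔ i ∈ S := by
  constructor
  · rintro ⟨j, hj, hij⟩
    rwa [← ι_inj hij]
  · exact fun h => ⟨i, h, rfl⟩

lemma down_up (S : Set (Fin n)) : down (up S) = S := by
  ext i; exact mem_up

lemma up_inj : Function.Injective (up (n := n)) := by
  intro S T h
  rw [← down_up S, h, down_up]

lemma up_pos {S : Set (Fin n)} {m : ℤ} (hm : m ∈ up S) : 1 ≤ m ∧ m ≤ (n : ℤ) := by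
  obtain ⟨i, _, rfl⟩ := hm
  have := i.isLt
  simp only []
  omega

lemma up_subset_Icc (S : Set (Fin n)) : up S ⊆ Set.Icc (-(n : ℤ)) (n : ℤ) := by
  intro m hm
  have := up_pos hm
  exact ⟨by omega, this.2⟩

lemma neg_up_subset_Icc (S : Set (Fin n)) : -up S ⊆ Set.Icc (-(n : ℤ)) (n : ℤ) := by
  intro m hm
  rw [Set.mem_neg] at hm
  have := up_pos hm
  exact ⟨by omega, by omega⟩

lemma down_neg_up (S : Set (Fin n)) : down (n := n) (-(up S)) = ∅ := by
  ext i
  simp only [down, Set.mem_setOf_eq, Set.mem_neg, Set.mem_empty_iff_false, iff_false]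
  intro h
  have := up_pos h
  omega

lemma up_nonempty {S : Set (Fin n)} (h : S.Nonempty) : (up S).Nonempty :=
  h.image _

lemma down_nonempty_of_up {S : Set (Fin n)} (h : (up S).Nonempty) : S.Nonempty := by
  obtain ⟨m, i, hi, _⟩ := h
  exact ⟨i, hi⟩

lemma zero_not_mem_up (S : Set (Fin n)) : (0 : ℤ) ∉ up S := fun h => by
  have := up_pos h; omega

lemma exists_of_pos {m : ℤ} (h1 : 1 ≤ m) (h2 : m ≤ (n : ℤ)) :
    ∃ i : Fin n, (i : ℤ) + 1 = m := by
  refine ⟨⟨(m - 1).toNat, by omega⟩, ?_⟩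
  show ((((m-1).toNat : ℕ) : ℤ)) + 1 = m
  omega




lemma neg_union (A B : Set ℤ) : -(A ∪ B) = -A ∪ -B := by
  ext m; simp only [Set.mem_neg, Set.mem_union]

lemma neg_zero_singleton : -({0} : Set ℤ) = {0} := by
  ext m; simp only [Set.mem_neg, Set.mem_singleton_iff]; omega

/-- The classes of the B-type partition associated to a tagged partition. -/
def Fcls (tp : TaggedPartition n) : Set (Set ℤ) :=
  {S | (∃ P ∈ tp.classes, tp.star P = none ∧ (S = up P ∨ S = -up P)) ∨
       (∃ P Q, tp.star P = some Q ∧ P ≠ Q ∧ S = up P ∪ -up Q) ∨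
       (∃ P, tp.star P = some P ∧ S = {0} ∪ up P ∪ -up P) ∨
       ((∀ P, tp.star P ≠ some P) ∧ S = {0})}


lemma pos_mem_shape {tp : TaggedPartition n} {S : Set ℤ} (hS : S ∈ Fcls tp) {m : ℤ}
    (hm : 0 < m) (hmS : m ∈ S) :
    ∃ P, P ∈ tp.classes ∧ m ∈ up P ∧
      ((tp.star P = none ∧ S = up P) ∨
       (∃ Q, tp.star P = some Q ∧ P ≠ Q ∧ S = up P ∪ -up Q) ∨
       (tp.star P = some P ∧ S = {0} ∪ up P ∪ -up P)) := by
  rcases hS with ⟨P, hP, hst, rfl | rfl⟩ | ⟨P, Q, hst, hne, rfl⟩ | ⟨P, hst, rfl⟩ | ⟨_, rfl⟩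
  · exact ⟨P, hP, hmS, Or.inl ⟨hst, rfl⟩⟩
  · rw [Set.mem_neg] at hmS; have := up_pos hmS; omega
  · rcases hmS with h | h
    · exact ⟨P, tp.star_dom P (by simp [hst]), h, Or.inr (Or.inl ⟨Q, hst, hne, rfl⟩)⟩
    · rw [Set.mem_neg] at h; have := up_pos h; omega
  · rcases hmS with (h | h) | h
    · simp only [Set.mem_singleton_iff] at h; omega
    · exact ⟨P, tp.star_dom P (by simp [hst]), h, Or.inr (Or.inr ⟨hst, rfl⟩)⟩
    · rw [Set.mem_neg] at h; have := up_pos h; omega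
  · simp only [Set.mem_singleton_iff] at hmS; omega

lemma neg_mem_shape {tp : TaggedPartition n} {S : Set ℤ} (hS : S ∈ Fcls tp) {m : ℤ}
    (hm : m < 0) (hmS : m ∈ S) :
    ∃ Q, Q ∈ tp.classes ∧ -m ∈ up Q ∧
      ((tp.star Q = none ∧ S = -up Q) ∨
       (∃ P, tp.star Q = some P ∧ P ≠ Q ∧ S = up P ∪ -up Q) ∨
       (tp.star Q = some Q ∧ S = {0} ∪ up Q ∪ -up Q)) := by
  rcases hS with ⟨P, hP, hst, rfl | rfl⟩ | ⟨P, Q, hst, hne, rfl⟩ | ⟨P, hst, rfl⟩ | ⟨_, rfl⟩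
  · have := up_pos hmS; omega
  · exact ⟨P, hP, by rwa [Set.mem_neg] at hmS, Or.inl ⟨hst, rfl⟩⟩
  · rcases hmS with h | h
    · have := up_pos h; omega
    · exact ⟨Q, tp.star_ran P Q hst, by rwa [Set.mem_neg] at h,
        Or.inr (Or.inl ⟨P, tp.star_invol P Q hst, hne, rfl⟩)⟩
  · rcases hmS with (h | h) | h
    · simp only [Set.mem_singleton_iff] at h; omega
    · have := up_pos h; omega
    · exact ⟨P, tp.star_dom P (by simp [hst]), by rwa [Set.mem_neg] at h,
        Or.inr (Or.inr ⟨hst, rfl⟩)⟩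
  · simp only [Set.mem_singleton_iff] at hmS; omega

lemma zero_mem_shape {tp : TaggedPartition n} {S : Set ℤ} (hS : S ∈ Fcls tp)
    (h0 : (0 : ℤ) ∈ S) :
    (∃ P, tp.star P = some P ∧ S = {0} ∪ up P ∪ -up P) ∨
    ((∀ P, tp.star P ≠ some P) ∧ S = {0}) := by
  rcases hS with ⟨P, hP, hst, rfl | rfl⟩ | ⟨P, Q, hst, hne, rfl⟩ | ⟨P, hst, rfl⟩ | ⟨h, rfl⟩
  · exact absurd h0 (zero_not_mem_up P)
  · rw [Set.mem_neg, neg_zero] at h0; exact absurd h0 (zero_not_mem_up P)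
  · rcases h0 with h | h
    · exact absurd h (zero_not_mem_up P)
    · rw [Set.mem_neg, neg_zero] at h; exact absurd h (zero_not_mem_up Q)
  · exact Or.inl ⟨P, hst, rfl⟩
  · exact Or.inr ⟨h, rfl⟩

lemma up_eq_of_mem {tp : TaggedPartition n} {P P' : Set (Fin n)} (hP : P ∈ tp.classes)
    (hP' : P' ∈ tp.classes) {m : ℤ} (h1 : m ∈ up P) (h2 : m ∈ up P') : P = P' := by
  obtain ⟨i, hi, rfl⟩ := h1
  refine tp.eq_of_inter P hP P' hP' ⟨i, hi, mem_up.1 h2⟩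


lemma Fcls_nonempty {tp : TaggedPartition n} {S : Set ℤ} (hS : S ∈ Fcls tp) :
    S.Nonempty := by
  rcases hS with ⟨P, hP, _, rfl | rfl⟩ | ⟨P, Q', hPQ, _, rfl⟩ | ⟨P, hP, rfl⟩ | ⟨_, rfl⟩
  · exact up_nonempty (tp.classes_nonempty P hP)
  · obtain ⟨m, hm⟩ := up_nonempty (tp.classes_nonempty P hP)
    exact ⟨-m, by simpa using hm⟩
  · exact (up_nonempty (tp.classes_nonempty P (tp.star_dom P (by simp [hPQ])))).mono
      Set.subset_union_left
  · exact ⟨0, Or.inl (Or.inl rfl)⟩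
  · exact ⟨0, rfl⟩

lemma zero_mem_of_fixed {tp : TaggedPartition n} {S : Set ℤ} (hS : S ∈ Fcls tp)
    (hneg : -S = S) : (0 : ℤ) ∈ S := by
  have aux : ∀ m : ℤ, 0 < m → m ∈ S → (0 : ℤ) ∈ S := by
    intro m hpos hm
    obtain ⟨P, hP, hmP, hsh⟩ := pos_mem_shape hS hpos hm
    rcases hsh with ⟨ha, rfl⟩ | ⟨Q, ha, hne, rfl⟩ | ⟨_, rfl⟩
    · exfalso
      have : -m ∈ up P := by rw [← hneg, Set.mem_neg, neg_neg]; exact hm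
      have := up_pos this; omega
    · exfalso
      apply hne
      apply up_inj
      ext x
      constructor
      · intro hx
        have hx1 := (up_pos hx).1
        have : -x ∈ up P ∪ -up Q := by
          rw [← hneg, Set.mem_neg, neg_neg]; exact Or.inl hx
        rcases this with h | h
        · have := up_pos h; omega
        · rwa [Set.mem_neg, neg_neg] at h
      · intro hx
        have hx1 := (up_pos hx).1
        have h2 : -x ∈ up P ∪ -up Q := Or.inr (by rwa [Set.mem_neg, neg_neg])
        have hxS : x ∈ up P ∪ -up Q := by
          rw [← hneg, Set.mem_neg]; exact h2
        rcases hxS with h | h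
        · exact h
        · rw [Set.mem_neg] at h; have := up_pos h; omega
    · exact Or.inl (Or.inl rfl)
  obtain ⟨m, hm⟩ := Fcls_nonempty hS
  rcases lt_trichotomy m 0 with h | h | h
  · have : -m ∈ S := by rw [← hneg, Set.mem_neg, neg_neg]; exact hm
    exact aux (-m) (by omega) this
  · exact h ▸ hm
  · exact aux m h hm

noncomputable def F (tp : TaggedPartition n) : BTypePartition n where
  classes := Fcls tp
  subset_Icc := by
    intro Q hQ
    rcases hQ with ⟨P, hP, _, rfl | rfl⟩ | ⟨P, Q', _, _, rfl⟩ | ⟨P, _, rfl⟩ | ⟨_, rfl⟩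
    · exact up_subset_Icc P
    · exact neg_up_subset_Icc P
    · exact Set.union_subset (up_subset_Icc P) (neg_up_subset_Icc Q')
    · refine Set.union_subset (Set.union_subset ?_ (up_subset_Icc P)) (neg_up_subset_Icc P)
      intro m hm
      simp only [Set.mem_singleton_iff] at hm
      subst hm
      constructor <;> omega
    · intro m hm
      simp only [Set.mem_singleton_iff] at hm
      subst hm
      constructor <;> omega
  classes_nonempty := by
    intro Q hQ
    rcases hQ with ⟨P, hP, _, rfl | rfl⟩ | ⟨P, Q', hPQ, _, rfl⟩ | ⟨P, hP, rfl⟩ | ⟨_, rfl⟩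
    · exact up_nonempty (tp.classes_nonempty P hP)
    · obtain ⟨m, hm⟩ := up_nonempty (tp.classes_nonempty P hP)
      exact ⟨-m, by simpa using hm⟩
    · exact (up_nonempty (tp.classes_nonempty P (tp.star_dom P (by simp [hPQ])))).mono
        Set.subset_union_left
    · exact ⟨0, Or.inl (Or.inl rfl)⟩
    · exact ⟨0, rfl⟩
  cover := by
    intro m h1 h2
    rcases lt_trichotomy m 0 with hm | hm | hm
    · -- negative
      obtain ⟨i, hi⟩ := exists_of_pos (n := n) (by omega) (by omega) (m := -m)
      obtain ⟨P, hP, hiP⟩ := tp.cover i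
      have hup : -m ∈ up P := hi ▸ mem_up.2 hiP
      cases hstar : tp.star P with
      | none => exact ⟨-up P, Or.inl ⟨P, hP, hstar, Or.inr rfl⟩, by simpa using hup⟩
      | some Q =>
        by_cases hPQ : P = Q
        · subst hPQ
          exact ⟨{0} ∪ up P ∪ -up P, Or.inr (Or.inr (Or.inl ⟨P, hstar, rfl⟩)),
            Or.inr (by simpa using hup)⟩
        · refine ⟨up Q ∪ -up P, Or.inr (Or.inl ⟨Q, P, tp.star_invol P Q hstar, Ne.symm hPQ, rfl⟩),
            Or.inr (by simpa using hup)⟩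
    · -- zero
      subst hm
      by_cases hfix : ∃ P, tp.star P = some P
      · obtain ⟨P, hP⟩ := hfix
        exact ⟨{0} ∪ up P ∪ -up P, Or.inr (Or.inr (Or.inl ⟨P, hP, rfl⟩)),
          Or.inl (Or.inl rfl)⟩
      · exact ⟨{0}, Or.inr (Or.inr (Or.inr ⟨fun P h => hfix ⟨P, h⟩, rfl⟩)), rfl⟩
    · -- positive
      obtain ⟨i, hi⟩ := exists_of_pos (n := n) (by omega) h2 (m := m)
      obtain ⟨P, hP, hiP⟩ := tp.cover i
      have hup : m ∈ up P := hi ▸ mem_up.2 hiP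
      cases hstar : tp.star P with
      | none => exact ⟨up P, Or.inl ⟨P, hP, hstar, Or.inl rfl⟩, hup⟩
      | some Q =>
        by_cases hPQ : P = Q
        · subst hPQ
          exact ⟨{0} ∪ up P ∪ -up P, Or.inr (Or.inr (Or.inl ⟨P, hstar, rfl⟩)),
            Or.inl (Or.inr hup)⟩
        · exact ⟨up P ∪ -up Q, Or.inr (Or.inl ⟨P, Q, hstar, hPQ, rfl⟩), Or.inl hup⟩
  eq_of_inter := by
    rintro S hS S' hS' ⟨m, hmS, hmS'⟩
    rcases lt_trichotomy m 0 with hm | hm | hm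
    · obtain ⟨Q, hQ, hmQ, h1⟩ := neg_mem_shape hS hm hmS
      obtain ⟨Q', hQ', hmQ', h1'⟩ := neg_mem_shape hS' hm hmS'
      obtain rfl := up_eq_of_mem hQ hQ' hmQ hmQ'
      rcases h1 with ⟨ha, rfl⟩ | ⟨P, ha, hne, rfl⟩ | ⟨ha, rfl⟩ <;>
        rcases h1' with ⟨hb, rfl⟩ | ⟨P', hb, hne', rfl⟩ | ⟨hb, rfl⟩ <;>
        simp_all
    · subst hm
      rcases zero_mem_shape hS hmS with ⟨P, ha, rfl⟩ | ⟨ha, rfl⟩ <;>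
        rcases zero_mem_shape hS' hmS' with ⟨P', hb, rfl⟩ | ⟨hb, rfl⟩
      · obtain rfl := tp.star_fixed P P' ha hb; rfl
      · exact absurd ha (hb P)
      · exact absurd hb (ha P')
      · rfl
    · obtain ⟨P, hP, hmP, h1⟩ := pos_mem_shape hS hm hmS
      obtain ⟨P', hP', hmP', h1'⟩ := pos_mem_shape hS' hm hmS'
      obtain rfl := up_eq_of_mem hP hP' hmP hmP'
      rcases h1 with ⟨ha, rfl⟩ | ⟨Q, ha, hne, rfl⟩ | ⟨ha, rfl⟩ <;>
        rcases h1' with ⟨hb, rfl⟩ | ⟨Q', hb, hne', rfl⟩ | ⟨hb, rfl⟩ <;>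
        simp_all
  neg_mem := by
    intro Q hQ
    rcases hQ with ⟨P, hP, hst, rfl | rfl⟩ | ⟨P, Q', hPQ, hne, rfl⟩ | ⟨P, hP, rfl⟩ | ⟨h0, rfl⟩
    · exact Or.inl ⟨P, hP, hst, Or.inr rfl⟩
    · exact Or.inl ⟨P, hP, hst, Or.inl (by rw [neg_neg])⟩
    · refine Or.inr (Or.inl ⟨Q', P, tp.star_invol P Q' hPQ, Ne.symm hne, ?_⟩)
      rw [neg_union, neg_neg, Set.union_comm]
    · refine Or.inr (Or.inr (Or.inl ⟨P, hP, ?_⟩))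
      rw [neg_union, neg_union, neg_neg, neg_zero_singleton]
      ext m
      simp only [Set.mem_union]
      tauto
    · refine Or.inr (Or.inr (Or.inr ⟨h0, ?_⟩))
      ext m
      simp only [Set.mem_neg, Set.mem_singleton_iff]
      omega
  existsUnique_fixed := by
    by_cases hfix : ∃ P, tp.star P = some P
    · obtain ⟨P₀, hP₀⟩ := hfix
      refine ⟨{0} ∪ up P₀ ∪ -up P₀, ⟨Or.inr (Or.inr (Or.inl ⟨P₀, hP₀, rfl⟩)), ?_⟩, ?_⟩
      · rw [neg_union, neg_union, neg_neg, neg_zero_singleton]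
        ext m; simp only [Set.mem_union]; tauto
      · rintro S ⟨hS, hSneg⟩
        rcases zero_mem_shape hS (zero_mem_of_fixed hS hSneg) with ⟨P, ha, rfl⟩ | ⟨ha, rfl⟩
        · obtain rfl := tp.star_fixed P P₀ ha hP₀; rfl
        · exact absurd hP₀ (ha P₀)
    · refine ⟨{0}, ⟨Or.inr (Or.inr (Or.inr ⟨fun P h => hfix ⟨P, h⟩, rfl⟩)),
        neg_zero_singleton⟩, ?_⟩
      rintro S ⟨hS, hSneg⟩
      rcases zero_mem_shape hS (zero_mem_of_fixed hS hSneg) with ⟨P, ha, _⟩ | ⟨_, rfl⟩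
      · exact absurd ⟨P, ha⟩ hfix
      · rfl

lemma down_eq_down {bt : BTypePartition n} {Q Q' : Set ℤ} (hQ : Q ∈ bt.classes)
    (hQ' : Q' ∈ bt.classes) (h : down (n := n) Q = down Q')
    (hne : (down (n := n) Q).Nonempty) : Q = Q' := by
  obtain ⟨i, hi⟩ := hne
  have hi' : i ∈ down (n := n) Q' := h ▸ hi
  exact bt.eq_of_inter Q hQ Q' hQ' ⟨(i : ℤ) + 1, hi, hi'⟩

open Classical in
noncomputable def Gstar (bt : BTypePartition n) (S : Set (Fin n)) : Option (Set (Fin n)) :=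
  if h : ∃ Q, Q ∈ bt.classes ∧ down (n := n) Q = S ∧ S.Nonempty ∧
      (down (n := n) (-Q)).Nonempty
  then some (down (-h.choose)) else none

lemma Gstar_eq_some {bt : BTypePartition n} {S T : Set (Fin n)} :
    Gstar bt S = some T ↔
      ∃ Q, Q ∈ bt.classes ∧ down Q = S ∧ S.Nonempty ∧ down (-Q) = T ∧ T.Nonempty := by
  constructor
  · intro h
    rw [Gstar] at h
    split_ifs at h with hc
    · obtain ⟨hQ, hdown, hne, hne'⟩ := hc.choose_spec
      injection h with h
      exact ⟨hc.choose, hQ, hdown, hne, h, h ▸ hne'⟩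
  · rintro ⟨Q, hQ, hdown, hne, hT, hTne⟩
    have hc : ∃ Q, Q ∈ bt.classes ∧ down Q = S ∧ S.Nonempty ∧
        (down (n := n) (-Q)).Nonempty := ⟨Q, hQ, hdown, hne, hT ▸ hTne⟩
    rw [Gstar, dif_pos hc]
    have hspec := hc.choose_spec
    have heq : hc.choose = Q :=
      down_eq_down hspec.1 hQ (hspec.2.1.trans hdown.symm) (by rw [hspec.2.1]; exact hne)
    rw [heq, hT]

lemma Gstar_eq_none {bt : BTypePartition n} {S : Set (Fin n)}
    (h : ¬ ∃ Q, Q ∈ bt.classes ∧ down (n := n) Q = S ∧ S.Nonempty ∧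
      (down (n := n) (-Q)).Nonempty) : Gstar bt S = none := by
  rw [Gstar, dif_neg h]

noncomputable def G (bt : BTypePartition n) : TaggedPartition n where
  classes := {P | ∃ Q ∈ bt.classes, down Q = P ∧ P.Nonempty}
  classes_nonempty := by rintro P ⟨Q, _, _, h⟩; exact h
  cover := by
    intro i
    obtain ⟨Q, hQ, hi⟩ := bt.cover ((i : ℤ) + 1) (by have := i.isLt; omega)
      (by have := i.isLt; omega)
    exact ⟨down Q, ⟨Q, hQ, rfl, ⟨i, hi⟩⟩, hi⟩
  eq_of_inter := by
    rintro P ⟨Q, hQ, rfl, _⟩ P' ⟨Q', hQ', rfl, _⟩ ⟨i, hi, hi'⟩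
    rw [bt.eq_of_inter Q hQ Q' hQ' ⟨(i : ℤ) + 1, hi, hi'⟩]
  star := Gstar bt
  star_dom := by
    intro P h
    rw [Gstar] at h
    split_ifs at h with hc
    · obtain ⟨Q, hQ, hdown, hne, _⟩ := hc
      exact ⟨Q, hQ, hdown, hne⟩
    · exact absurd rfl h
  star_ran := by
    intro P T h
    obtain ⟨Q, hQ, _, _, hT, hTne⟩ := Gstar_eq_some.1 h
    exact ⟨-Q, bt.neg_mem Q hQ, hT, hTne⟩
  star_invol := by
    intro P T h
    obtain ⟨Q, hQ, hdown, hne, hT, hTne⟩ := Gstar_eq_some.1 h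
    exact Gstar_eq_some.2 ⟨-Q, bt.neg_mem Q hQ, hT, hTne, by rw [neg_neg]; exact hdown,
      hdown ▸ hne⟩
  star_fixed := by
    intro P P' h h'
    obtain ⟨Q, hQ, hdown, hne, hT, _⟩ := Gstar_eq_some.1 h
    obtain ⟨Q', hQ', hdown', hne', hT', _⟩ := Gstar_eq_some.1 h'
    have hQfix : -Q = Q := down_eq_down (bt.neg_mem Q hQ) hQ (hT.trans hdown.symm) (hT ▸ hne)
    have hQfix' : -Q' = Q' :=
      down_eq_down (bt.neg_mem Q' hQ') hQ' (hT'.trans hdown'.symm) (hT' ▸ hne')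
    obtain ⟨Q₀, _, huniq⟩ := bt.existsUnique_fixed
    have e1 : Q = Q₀ := huniq Q ⟨hQ, hQfix⟩
    have e2 : Q' = Q₀ := huniq Q' ⟨hQ', hQfix'⟩
    rw [← hdown, ← hdown', e1, e2]

lemma up_down_subset (Q : Set ℤ) : up (down (n := n) Q) ⊆ Q := by
  rintro m ⟨i, hi, rfl⟩
  exact hi

lemma mem_up_down {bt : BTypePartition n} {Q : Set ℤ} (hQ : Q ∈ bt.classes) {m : ℤ}
    (hm : m ∈ Q) (hpos : 0 < m) : m ∈ up (down (n := n) Q) := by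
  have := bt.subset_Icc Q hQ hm
  obtain ⟨i, hi⟩ := exists_of_pos (n := n) (by omega) this.2 (m := m)
  exact ⟨i, by show (i : ℤ) + 1 ∈ Q; rw [hi]; exact hm, hi⟩

lemma zero_mem_iff_fixed {bt : BTypePartition n} {Q : Set ℤ} (hQ : Q ∈ bt.classes) :
    (0 : ℤ) ∈ Q ↔ -Q = Q := by
  constructor
  · intro h0
    exact bt.eq_of_inter (-Q) (bt.neg_mem Q hQ) Q hQ ⟨0, by simpa using h0, h0⟩
  · intro hfix
    obtain ⟨Q₀, hQ₀, huniq⟩ := bt.existsUnique_fixed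
    obtain ⟨Q', hQ', h0'⟩ := bt.cover 0 (by simp) (by simp)
    have hfix' : -Q' = Q' :=
      bt.eq_of_inter (-Q') (bt.neg_mem Q' hQ') Q' hQ' ⟨0, by simpa using h0', h0'⟩
    rw [huniq Q ⟨hQ, hfix⟩, ← huniq Q' ⟨hQ', hfix'⟩]
    exact h0'

lemma decomp {bt : BTypePartition n} {Q : Set ℤ} (hQ : Q ∈ bt.classes)
    (h0 : (0 : ℤ) ∉ Q) : Q = up (down (n := n) Q) ∪ -up (down (n := n) (-Q)) := by
  ext m
  constructor
  · intro hm
    rcases lt_trichotomy m 0 with h | h | h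
    · refine Or.inr ?_
      rw [Set.mem_neg]
      exact mem_up_down (bt.neg_mem Q hQ) (by simpa using hm) (by omega)
    · exact absurd (h ▸ hm) h0
    · exact Or.inl (mem_up_down hQ hm h)
  · rintro (hm | hm)
    · exact up_down_subset Q hm
    · rw [Set.mem_neg] at hm
      have := up_down_subset (-Q) hm
      rwa [Set.mem_neg, neg_neg] at this

lemma decomp_fixed {bt : BTypePartition n} {Q : Set ℤ} (hQ : Q ∈ bt.classes)
    (h0 : (0 : ℤ) ∈ Q) :
    Q = {0} ∪ up (down (n := n) Q) ∪ -up (down (n := n) Q) := by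
  have hfix : -Q = Q := (zero_mem_iff_fixed hQ).1 h0
  ext m
  constructor
  · intro hm
    rcases lt_trichotomy m 0 with h | h | h
    · refine Or.inr ?_
      rw [Set.mem_neg]
      have : -m ∈ Q := by rw [← hfix, Set.mem_neg, neg_neg]; exact hm
      exact mem_up_down hQ this (by omega)
    · exact Or.inl (Or.inl (by simp [h]))
    · exact Or.inl (Or.inr (mem_up_down hQ hm h))
  · rintro ((hm | hm) | hm)
    · simp only [Set.mem_singleton_iff] at hm; exact hm ▸ h0
    · exact up_down_subset Q hm
    · rw [Set.mem_neg] at hm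
      have h2 := up_down_subset Q hm
      have h3 : -m ∈ -Q := by rwa [hfix]
      rwa [Set.mem_neg, neg_neg] at h3

lemma down_union (A B : Set ℤ) : down (n := n) (A ∪ B) = down A ∪ down B := rfl

lemma down_zero_singleton : down (n := n) {0} = ∅ := by
  ext i
  simp only [down, Set.mem_setOf_eq, Set.mem_singleton_iff, Set.mem_empty_iff_false,
    iff_false]
  omega

lemma tp_ext {a b : TaggedPartition n} (h1 : a.classes = b.classes)
    (h2 : a.star = b.star) : a = b := by
  cases a; cases b
  dsimp at h1 h2
  subst h1; subst h2
  rfl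

lemma bt_ext {a b : BTypePartition n} (h1 : a.classes = b.classes) : a = b := by
  cases a; cases b
  dsimp at h1
  subst h1
  rfl

lemma GF (tp : TaggedPartition n) : G (F tp) = tp := by
  have hcls : (G (F tp)).classes = tp.classes := by
    ext P
    constructor
    · rintro ⟨Q, hQ, rfl, hne⟩
      rcases hQ with ⟨P', hP', _, rfl | rfl⟩ | ⟨P', Q', hst, _, rfl⟩ | ⟨P', hst, rfl⟩ |
          ⟨_, rfl⟩
      · rwa [down_up]
      · rw [down_neg_up] at hne ⊢
        exact absurd hne (by simp)
      · rw [down_union, down_up, down_neg_up, Set.union_empty]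
        exact tp.star_dom P' (by simp [hst])
      · rw [down_union, down_union, down_zero_singleton, down_up, down_neg_up,
          Set.empty_union, Set.union_empty]
        exact tp.star_dom P' (by simp [hst])
      · rw [down_zero_singleton] at hne
        exact absurd hne (by simp)
    · intro hP
      have hne := tp.classes_nonempty P hP
      cases hst : tp.star P with
      | none =>
        exact ⟨up P, Or.inl ⟨P, hP, hst, Or.inl rfl⟩, down_up P, (down_up P).symm ▸ hne⟩
      | some Q =>
        by_cases hPQ : P = Q
        · subst hPQ
          refine ⟨{0} ∪ up P ∪ -up P, Or.inr (Or.inr (Or.inl ⟨P, hst, rfl⟩)), ?_, ?_⟩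
          · rw [down_union, down_union, down_zero_singleton, down_up, down_neg_up,
              Set.empty_union, Set.union_empty]
          · exact hne
        · refine ⟨up P ∪ -up Q, Or.inr (Or.inl ⟨P, Q, hst, hPQ, rfl⟩), ?_, ?_⟩
          · rw [down_union, down_up, down_neg_up, Set.union_empty]
          · exact hne
  refine tp_ext hcls ?_
  funext S
  show Gstar (F tp) S = tp.star S
  cases hst : tp.star S with
  | none =>
    apply Gstar_eq_none
    rintro ⟨Q, hQ, hdown, hSne, hTne⟩
    rcases hQ with ⟨P', hP', hst', rfl | rfl⟩ | ⟨P', Q', hst', _, rfl⟩ | ⟨P', hst', rfl⟩ |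
        ⟨_, rfl⟩
    · rw [down_neg_up] at hTne
      exact absurd hTne (by simp)
    · rw [down_neg_up] at hdown
      rw [← hdown] at hSne
      exact absurd hSne (by simp)
    · rw [down_union, down_up, down_neg_up, Set.union_empty] at hdown
      rw [← hdown] at hst
      rw [hst'] at hst
      cases hst
    · rw [down_union, down_union, down_zero_singleton, down_up, down_neg_up,
        Set.empty_union, Set.union_empty] at hdown
      rw [← hdown] at hst
      rw [hst'] at hst
      cases hst
    · rw [down_zero_singleton] at hdown
      rw [← hdown] at hSne
      exact absurd hSne (by simp)
  | some T =>
    have hS : S ∈ tp.classes := tp.star_dom S (by simp [hst])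
    have hT : T ∈ tp.classes := tp.star_ran S T hst
    have hSne := tp.classes_nonempty S hS
    have hTne := tp.classes_nonempty T hT
    by_cases hEq : S = T
    · subst hEq
      refine Gstar_eq_some.2 ⟨{0} ∪ up S ∪ -up S,
        Or.inr (Or.inr (Or.inl ⟨S, hst, rfl⟩)), ?_, hSne, ?_, hSne⟩
      · rw [down_union, down_union, down_zero_singleton, down_up, down_neg_up,
          Set.empty_union, Set.union_empty]
      · rw [neg_union, neg_union, neg_zero_singleton, neg_neg, down_union, down_union,
          down_zero_singleton, down_up, down_neg_up]
        simp
    · refine Gstar_eq_some.2 ⟨up S ∪ -up T, Or.inr (Or.inl ⟨S, T, hst, hEq, rfl⟩),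
        ?_, hSne, ?_, hTne⟩
      · rw [down_union, down_up, down_neg_up, Set.union_empty]
      · rw [neg_union, neg_neg, down_union, down_up, down_neg_up]
        simp

lemma up_empty : up (∅ : Set (Fin n)) = ∅ := Set.image_empty _

lemma neg_empty : -(∅ : Set ℤ) = ∅ := by
  ext m; simp [Set.mem_neg]

lemma FG (bt : BTypePartition n) : F (G bt) = bt := by
  refine bt_ext ?_
  ext S
  constructor
  · -- Fcls (G bt) ⊆ bt.classes
    rintro (⟨P, ⟨Q, hQ, hdQ, hPne⟩, hstnone, hS⟩ | ⟨P, T, hst, hne, rfl⟩ |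
        ⟨P, hst, rfl⟩ | ⟨hno, rfl⟩)
    · -- untagged class
      have hTempty : down (n := n) (-Q) = ∅ := by
        by_contra hne'
        have hne2 := Set.nonempty_iff_ne_empty.2 hne'
        have : Gstar bt P = some (down (-Q)) :=
          Gstar_eq_some.2 ⟨Q, hQ, hdQ, hPne, rfl, hne2⟩
        have hstnone2 : Gstar bt P = none := hstnone
        rw [hstnone2] at this
        cases this
      have h0 : (0 : ℤ) ∉ Q := by
        intro h0
        have hfix := (zero_mem_iff_fixed hQ).1 h0
        rw [hfix, hdQ] at hTempty
        rw [hTempty] at hPne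
        exact absurd hPne (by simp)
      have hdec := decomp hQ h0
      rw [hdQ, hTempty, up_empty, neg_empty, Set.union_empty] at hdec
      rcases hS with rfl | rfl
      · exact hdec ▸ hQ
      · exact hdec ▸ bt.neg_mem Q hQ
    · -- paired class
      obtain ⟨Q, hQ, hdQ, hPne, hdT, hTne⟩ := Gstar_eq_some.1 hst
      have h0 : (0 : ℤ) ∉ Q := by
        intro h0
        have hfix := (zero_mem_iff_fixed hQ).1 h0
        rw [hfix, hdQ] at hdT
        exact hne (hdT.symm ▸ rfl)
      have hdec := decomp hQ h0
      rw [hdQ, hdT] at hdec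
      exact hdec ▸ hQ
    · -- fixed class
      obtain ⟨Q, hQ, hdQ, hPne, hdT, hTne⟩ := Gstar_eq_some.1 hst
      have hfix : -Q = Q :=
        down_eq_down (bt.neg_mem Q hQ) hQ (hdT.trans hdQ.symm) (hdT ▸ hTne)
      have h0 : (0 : ℤ) ∈ Q := (zero_mem_iff_fixed hQ).2 hfix
      have hdec := decomp_fixed hQ h0
      rw [hdQ] at hdec
      exact hdec ▸ hQ
    · -- singleton zero class
      obtain ⟨Q', hQ', h0'⟩ := bt.cover 0 (by simp) (by simp)
      have hfix' : -Q' = Q' := (zero_mem_iff_fixed hQ').1 h0'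
      have hP' : down (n := n) Q' = ∅ := by
        by_contra hne'
        have hne2 := Set.nonempty_iff_ne_empty.2 hne'
        have : Gstar bt (down Q') = some (down (n := n) Q') :=
          Gstar_eq_some.2 ⟨Q', hQ', rfl, hne2, by rw [hfix'], hne2⟩
        exact hno _ this
      have hdec := decomp_fixed hQ' h0'
      rw [hP', up_empty, neg_empty, Set.union_empty, Set.union_empty] at hdec
      exact hdec ▸ hQ'
  · -- bt.classes ⊆ Fcls (G bt)
    intro hS
    have hSne := bt.classes_nonempty S hS
    by_cases h0 : (0 : ℤ) ∈ S
    · have hfix : -S = S := (zero_mem_iff_fixed hS).1 h0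
      by_cases hP : (down (n := n) S).Nonempty
      · have hst : Gstar bt (down S) = some (down (n := n) S) :=
          Gstar_eq_some.2 ⟨S, hS, rfl, hP, by rw [hfix], hP⟩
        exact Or.inr (Or.inr (Or.inl ⟨down S, hst, decomp_fixed hS h0⟩))
      · rw [Set.not_nonempty_iff_eq_empty] at hP
        have hdec := decomp_fixed hS h0
        rw [hP, up_empty, neg_empty, Set.union_empty, Set.union_empty] at hdec
        refine Or.inr (Or.inr (Or.inr ⟨?_, hdec⟩))
        intro P' hst'
        obtain ⟨Q'', hQ'', hd'', hne'', hd2'', _⟩ := Gstar_eq_some.1 hst'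
        have hfix'' : -Q'' = Q'' :=
          down_eq_down (bt.neg_mem Q'' hQ'') hQ'' (hd2''.trans hd''.symm) (hd2'' ▸ hne'')
        obtain ⟨Q₀, _, huniq⟩ := bt.existsUnique_fixed
        have e1 : Q'' = Q₀ := huniq Q'' ⟨hQ'', hfix''⟩
        have e2 : S = Q₀ := huniq S ⟨hS, hfix⟩
        rw [e1, ← e2, hP] at hd''
        rw [← hd''] at hne''
        exact absurd hne'' (by simp)
    · have hdec := decomp hS h0
      by_cases hP : (down (n := n) S).Nonempty
      · by_cases hT : (down (n := n) (-S)).Nonempty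
        · have hPT : down (n := n) S ≠ down (n := n) (-S) := by
            intro heq
            have : S = -S := down_eq_down hS (bt.neg_mem S hS) heq hP
            exact h0 ((zero_mem_iff_fixed hS).2 this.symm)
          have hst : Gstar bt (down S) = some (down (n := n) (-S)) :=
            Gstar_eq_some.2 ⟨S, hS, rfl, hP, rfl, hT⟩
          exact Or.inr (Or.inl ⟨down S, down (-S), hst, hPT, hdec⟩)
        · rw [Set.not_nonempty_iff_eq_empty] at hT
          rw [hT, up_empty, neg_empty, Set.union_empty] at hdec
          have hstnone : Gstar bt (down (n := n) S) = none := by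
            apply Gstar_eq_none
            rintro ⟨Q'', hQ'', hd'', hne'', hne2''⟩
            have : Q'' = S := down_eq_down hQ'' hS hd'' (hd'' ▸ hne'')
            rw [this, hT] at hne2''
            exact absurd hne2'' (by simp)
          exact Or.inl ⟨down S, ⟨S, hS, rfl, hP⟩, hstnone, Or.inl hdec⟩
      · rw [Set.not_nonempty_iff_eq_empty] at hP
        rw [hP, up_empty, Set.empty_union] at hdec
        have hT : (down (n := n) (-S)).Nonempty := by
          by_contra hT
          rw [Set.not_nonempty_iff_eq_empty] at hT
          rw [hT, up_empty, neg_empty] at hdec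
          rw [hdec] at hSne
          exact absurd hSne (by simp)
        have hstnone : Gstar bt (down (n := n) (-S)) = none := by
          apply Gstar_eq_none
          rintro ⟨Q'', hQ'', hd'', hne'', hne2''⟩
          have : Q'' = -S := down_eq_down hQ'' (bt.neg_mem S hS) hd'' (hd'' ▸ hne'')
          rw [this, neg_neg, hP] at hne2''
          exact absurd hne2'' (by simp)
        exact Or.inl ⟨down (-S), ⟨-S, bt.neg_mem S hS, rfl, hT⟩, hstnone, Or.inr hdec⟩

end BT

/-- Proposition 7.4. For every `n`, the tagged partitions of
`{1,…,n}` are in bijection with the B-type partitions of `{−n,…,n}`; in particular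
the two sets have the same cardinality. -/
theorem taggedPartition_equiv_bTypePartition (n : ℕ) :
    Nonempty (TaggedPartition n ≃ BTypePartition n) ∧
    Nat.card (TaggedPartition n) = Nat.card (BTypePartition n) := by
  have e : TaggedPartition n ≃ BTypePartition n := ⟨BT.F, BT.G, BT.GF, BT.FG⟩
  exact ⟨⟨e⟩, Nat.card_congr e⟩
end
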